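/- arXiv:1004.2349 — 6 statements merged into one kernel-verified Lean document; each statement's English description precedes it below -/
import Mathlib

section
/- In the quantum torus with X_1 X_2 = q X_2 X_1 and cluster variables X_m defined by X_{m-1} X_{m+1} = q X_m^2 + 1, one has X_{-1} = X^{(3,-2)} + X^{(-1,-2)} + (q + q^{-1}) X^{(1,-2)} + X^{(-1,0)}, where X^{(a,b)} = q^{ab/2} X_1^a X_2^b. -/
/-- The normalized quantum-torus monomial `X^{(a,b)} = q^{-ab/2} X₁^a X₂^b`,
where `v = q^{1/2}`. -/
def Xmon {F : Type*} [DivisionRing F] (v X1 X2 : F) (a b : ℤ) : F :=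
  v ^ (-(a * b)) * X1 ^ a * X2 ^ b

private lemma qtorus_key {F : Type*} [DivisionRing F] (v a b : F) (hv : v ≠ 0) (ha : a ≠ 0) (hb : b ≠ 0)
    (hvc : ∀ x : F, v * x = x * v)
    (h12 : a * b = v ^ 2 * (b * a)) :
    (v^2*((v^2*a^2+1)*b⁻¹)^2+1)*a⁻¹ =
      v^6 * a^3 * (b^2)⁻¹ + (v^2)⁻¹*a⁻¹*(b^2)⁻¹ + (v^2 + (v^2)⁻¹) * (v^2*a*(b^2)⁻¹) + a⁻¹ := by
  set u : F := v ^ 2 with hu'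
  have hu : u ≠ 0 := pow_ne_zero 2 hv
  have cu : ∀ x : F, x * u = u * x := by
    intro x
    have c : Commute v x := hvc x
    exact (c.pow_left 2).eq.symm
  have cw : ∀ x : F, x * u⁻¹ = u⁻¹ * x := fun x => (Commute.inv_left₀ ((cu x).symm)).eq.symm
  have cu' : ∀ x y : F, x * (u * y) = u * (x * y) := by
    intro x y; rw [← mul_assoc, cu, mul_assoc]
  have cw' : ∀ x y : F, x * (u⁻¹ * y) = u⁻¹ * (x * y) := by
    intro x y; rw [← mul_assoc, cw, mul_assoc]
  have r1 : b * a = u⁻¹ * (a * b) := by rw [h12, inv_mul_cancel_left₀ hu]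
  have r1' : ∀ y : F, b * (a * y) = u⁻¹ * (a * (b * y)) := by
    intro y; rw [← mul_assoc, r1, mul_assoc, mul_assoc]
  have r3 : b⁻¹ * a = u * (a * b⁻¹) := by
    apply mul_left_cancel₀ hb
    rw [mul_inv_cancel_left₀ hb, cu', r1', mul_inv_cancel_left₀ hu, mul_inv_cancel₀ hb, mul_one]
  have r3' : ∀ y : F, b⁻¹ * (a * y) = u * (a * (b⁻¹ * y)) := by
    intro y; rw [← mul_assoc, r3, mul_assoc, mul_assoc]
  have r2 : b * a⁻¹ = u * (a⁻¹ * b) := by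
    apply mul_right_cancel₀ ha
    rw [mul_assoc, inv_mul_cancel₀ ha, mul_one, mul_assoc, mul_assoc, r1,
      cw', mul_inv_cancel_left₀ hu, inv_mul_cancel_left₀ ha]
  have r2' : ∀ y : F, b * (a⁻¹ * y) = u * (a⁻¹ * (b * y)) := by
    intro y; rw [← mul_assoc, r2, mul_assoc, mul_assoc]
  have r4 : b⁻¹ * a⁻¹ = u⁻¹ * (a⁻¹ * b⁻¹) := by
    apply mul_left_cancel₀ hb
    rw [mul_inv_cancel_left₀ hb, cw', r2', inv_mul_cancel_left₀ hu, mul_inv_cancel₀ hb, mul_one]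
  have r4' : ∀ y : F, b⁻¹ * (a⁻¹ * y) = u⁻¹ * (a⁻¹ * (b⁻¹ * y)) := by
    intro y; rw [← mul_assoc, r4, mul_assoc, mul_assoc]
  have cAu : ∀ y : F, a * (u * y) = u * (a * y) := fun y => cu' a y
  have tAu : a * u = u * a := cu a
  have cAw : ∀ y : F, a * (u⁻¹ * y) = u⁻¹ * (a * y) := fun y => cw' a y
  have tAw : a * u⁻¹ = u⁻¹ * a := cw a
  have cAiu : ∀ y : F, a⁻¹ * (u * y) = u * (a⁻¹ * y) := fun y => cu' a⁻¹ y
  have tAiu : a⁻¹ * u = u * a⁻¹ := cu a⁻¹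
  have cAiw : ∀ y : F, a⁻¹ * (u⁻¹ * y) = u⁻¹ * (a⁻¹ * y) := fun y => cw' a⁻¹ y
  have tAiw : a⁻¹ * u⁻¹ = u⁻¹ * a⁻¹ := cw a⁻¹
  have cBu : ∀ y : F, b * (u * y) = u * (b * y) := fun y => cu' b y
  have tBu : b * u = u * b := cu b
  have cBw : ∀ y : F, b * (u⁻¹ * y) = u⁻¹ * (b * y) := fun y => cw' b y
  have tBw : b * u⁻¹ = u⁻¹ * b := cw b
  have cBiu : ∀ y : F, b⁻¹ * (u * y) = u * (b⁻¹ * y) := fun y => cu' b⁻¹ y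
  have tBiu : b⁻¹ * u = u * b⁻¹ := cu b⁻¹
  have cBiw : ∀ y : F, b⁻¹ * (u⁻¹ * y) = u⁻¹ * (b⁻¹ * y) := fun y => cw' b⁻¹ y
  have tBiw : b⁻¹ * u⁻¹ = u⁻¹ * b⁻¹ := cw b⁻¹
  have h6 : v ^ 6 = u * (u * u) := by rw [hu', ← pow_add, ← pow_add]
  rw [h6]
  simp only [mul_add, add_mul, mul_one, one_mul, mul_assoc, pow_succ, pow_zero, mul_inv_rev,
    cAu, tAu, cAw, tAw, cAiu, tAiu, cAiw, tAiw, cBu, tBu, cBw, tBw, cBiu, tBiu, cBiw, tBiw,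
    r1', r2', r3', r4', r1, r2, r3, r4,
    mul_inv_cancel₀ hu, inv_mul_cancel₀ hu, mul_inv_cancel_left₀ hu, inv_mul_cancel_left₀ hu,
    mul_inv_cancel₀ ha, inv_mul_cancel₀ ha, mul_inv_cancel_left₀ ha, inv_mul_cancel_left₀ ha,
    mul_inv_cancel₀ hb, inv_mul_cancel₀ hb, mul_inv_cancel_left₀ hb, inv_mul_cancel_left₀ hb]
  abel

/-- `X_{-1} = X^{(3,-2)} + X^{(-1,-2)} + (q + q^{-1}) X^{(1,-2)} + X^{(-1,0)}` in the
quantum torus, where `v = q^{1/2}`. -/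
theorem cluster_Xneg1
{F : Type*} [DivisionRing F] (v : F) (hv : v ≠ 0)
    (hvc : ∀ x : F, v * x = x * v)
    (X : ℤ → F) (hXne : ∀ m : ℤ, X m ≠ 0)
    (h12 : X 1 * X 2 = v ^ 2 * (X 2 * X 1))
    (hrec : ∀ m : ℤ, X (m - 1) * X (m + 1) = v ^ 2 * X m ^ 2 + 1) :
    X (-1) = Xmon v (X 1) (X 2) 3 (-2) + Xmon v (X 1) (X 2) (-1) (-2)
      + (v ^ (2 : ℤ) + v ^ (-2 : ℤ)) * Xmon v (X 1) (X 2) 1 (-2)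
      + Xmon v (X 1) (X 2) (-1) 0 := by
  have ha : X 1 ≠ 0 := hXne 1
  have hb : X 2 ≠ 0 := hXne 2
  have h0 : X 0 * X 2 = v ^ 2 * X 1 ^ 2 + 1 := by
    have h := hrec 1
    norm_num at h
    exact h
  have hm1 : X (-1) * X 1 = v ^ 2 * X 0 ^ 2 + 1 := by
    have h := hrec 0
    norm_num at h
    exact h
  have hX0 : X 0 = (v ^ 2 * X 1 ^ 2 + 1) * (X 2)⁻¹ :=
    (eq_mul_inv_iff_mul_eq₀ hb).2 h0
  have hXm1 : X (-1) = (v ^ 2 * X 0 ^ 2 + 1) * (X 1)⁻¹ :=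
    (eq_mul_inv_iff_mul_eq₀ ha).2 hm1
  rw [hXm1, hX0]
  have e1 : Xmon v (X 1) (X 2) 3 (-2) = v ^ 6 * (X 1) ^ 3 * ((X 2) ^ 2)⁻¹ := by
    norm_num [Xmon, zpow_neg, zpow_ofNat]
  have e2 : Xmon v (X 1) (X 2) (-1) (-2) = (v ^ 2)⁻¹ * (X 1)⁻¹ * ((X 2) ^ 2)⁻¹ := by
    norm_num [Xmon, zpow_neg, zpow_ofNat]
  have e3 : Xmon v (X 1) (X 2) 1 (-2) = v ^ 2 * X 1 * ((X 2) ^ 2)⁻¹ := by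
    norm_num [Xmon, zpow_neg, zpow_ofNat]
  have e4 : Xmon v (X 1) (X 2) (-1) 0 = (X 1)⁻¹ := by
    norm_num [Xmon, zpow_neg, zpow_ofNat]
  have e5 : (v ^ (2 : ℤ) + v ^ (-2 : ℤ)) = v ^ 2 + (v ^ 2)⁻¹ := by
    norm_num [zpow_neg, zpow_ofNat]
  rw [e1, e2, e3, e4, e5]
  exact qtorus_key v (X 1) (X 2) hv ha hb hvc h12
end

section
/- In the quantum cluster algebra of the Kronecker quiver, define X_δ := q^{1/2}(X_0 X_3 - q X_1 X_2). Then also X_δ = q^{1/2}(X_{-1} X_2 - q X_0 X_1), and moreover X_δ = X^{(-1,1)} + X^{(1,-1)} + X^{(-1,-1)}. -/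
private lemma key {F : Type*} [DivisionRing F] (v : F) (hv : v ≠ 0)
    (hvc : ∀ x : F, v * x = x * v)
    (p x0 a b x3 : F) (ha : a ≠ 0) (hb : b ≠ 0)
    (h12 : a * b = v ^ 2 * (b * a))
    (h0 : x0 * b = v ^ 2 * a ^ 2 + 1)
    (h2 : a * x3 = v ^ 2 * b ^ 2 + 1)
    (hm : p * a = v ^ 2 * x0 ^ 2 + 1) :
    v * (x0 * x3 - v ^ 2 * (a * b)) = v * (p * b - v ^ 2 * (x0 * a)) ∧
      v * (x0 * x3 - v ^ 2 * (a * b))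
        = (v * (a⁻¹ * b) + v * (a * b⁻¹)) + v⁻¹ * (a⁻¹ * b⁻¹) := by
  -- v commutation helpers
  have hvinv : ∀ x : F, x * v⁻¹ = v⁻¹ * x := by
    intro x
    apply mul_left_cancel₀ hv
    rw [← mul_assoc, hvc, mul_assoc, mul_inv_cancel₀ hv, mul_one,
      ← mul_assoc, mul_inv_cancel₀ hv, one_mul]
  have hmv : ∀ (t x : F), t * (v * x) = v * (t * x) := by
    intro t x; rw [← mul_assoc, ← hvc, mul_assoc]
  have hmv' : ∀ (t x : F), t * (v⁻¹ * x) = v⁻¹ * (t * x) := by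
    intro t x; rw [← mul_assoc, hvinv, mul_assoc]
  -- expressions for x0, x3, p
  have hx0 : x0 = (v ^ 2 * a ^ 2 + 1) * b⁻¹ := (eq_mul_inv_iff_mul_eq₀ hb).2 h0
  have hx3 : x3 = a⁻¹ * (v ^ 2 * b ^ 2 + 1) := (eq_inv_mul_iff_mul_eq₀ ha).2 h2
  have hp : p = (v ^ 2 * x0 ^ 2 + 1) * a⁻¹ := (eq_mul_inv_iff_mul_eq₀ ha).2 hm
  rw [hx0] at hp
  -- cancellation lemmas
  have ka : a * a⁻¹ = 1 := mul_inv_cancel₀ ha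
  have ka2 : a⁻¹ * a = 1 := inv_mul_cancel₀ ha
  have kb : b * b⁻¹ = 1 := mul_inv_cancel₀ hb
  have kb2 : b⁻¹ * b = 1 := inv_mul_cancel₀ hb
  have kv : v * v⁻¹ = 1 := mul_inv_cancel₀ hv
  have kv2 : v⁻¹ * v = 1 := inv_mul_cancel₀ hv
  have ka' : ∀ x : F, a * (a⁻¹ * x) = x := fun x => by rw [← mul_assoc, ka, one_mul]
  have ka2' : ∀ x : F, a⁻¹ * (a * x) = x := fun x => by rw [← mul_assoc, ka2, one_mul]
  have kb' : ∀ x : F, b * (b⁻¹ * x) = x := fun x => by rw [← mul_assoc, kb, one_mul]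
  have kb2' : ∀ x : F, b⁻¹ * (b * x) = x := fun x => by rw [← mul_assoc, kb2, one_mul]
  have kv' : ∀ x : F, v * (v⁻¹ * x) = x := fun x => by rw [← mul_assoc, kv, one_mul]
  have kv2' : ∀ x : F, v⁻¹ * (v * x) = x := fun x => by rw [← mul_assoc, kv2, one_mul]
  -- commutation lemmas, normal form: v's, then a-stuff, then b-stuff
  have c1 : b * a = v⁻¹ * (v⁻¹ * (a * b)) := by
    rw [h12, pow_two, mul_assoc, inv_mul_cancel_left₀ hv, inv_mul_cancel_left₀ hv]
  have c2 : b * a⁻¹ = v * (v * (a⁻¹ * b)) := by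
    apply mul_left_cancel₀ ha
    rw [← mul_assoc, h12, pow_two]
    simp only [mul_assoc]
    rw [ka, mul_one, hmv a, hmv a, ka']
  have c3 : b⁻¹ * a = v * (v * (a * b⁻¹)) := by
    apply mul_right_cancel₀ hb
    simp only [mul_assoc]
    rw [h12, pow_two]
    simp only [mul_assoc]
    rw [kb2, mul_one, hmv b⁻¹, hmv b⁻¹, kb2']
  have c4 : b⁻¹ * a⁻¹ = v⁻¹ * (v⁻¹ * (a⁻¹ * b⁻¹)) := by
    apply mul_right_cancel₀ ha
    simp only [mul_assoc]
    rw [ka2, mul_one, c3, hmv a⁻¹, hmv a⁻¹, ka2', kv2', kv2']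
  have c1' : ∀ x : F, b * (a * x) = v⁻¹ * (v⁻¹ * (a * (b * x))) := by
    intro x; rw [← mul_assoc, c1, mul_assoc, mul_assoc, mul_assoc]
  have c2' : ∀ x : F, b * (a⁻¹ * x) = v * (v * (a⁻¹ * (b * x))) := by
    intro x; rw [← mul_assoc, c2, mul_assoc, mul_assoc, mul_assoc]
  have c3' : ∀ x : F, b⁻¹ * (a * x) = v * (v * (a * (b⁻¹ * x))) := by
    intro x; rw [← mul_assoc, c3, mul_assoc, mul_assoc, mul_assoc]
  have c4' : ∀ x : F, b⁻¹ * (a⁻¹ * x) = v⁻¹ * (v⁻¹ * (a⁻¹ * (b⁻¹ * x))) := by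
    intro x; rw [← mul_assoc, c4, mul_assoc, mul_assoc, mul_assoc]
  constructor
  · rw [hx0, hx3, hp]
    simp only [pow_two, mul_assoc, mul_add, add_mul, mul_one, one_mul, sub_eq_add_neg,
      neg_add, mul_neg, neg_mul,
      hmv a, hmv a⁻¹, hmv b, hmv b⁻¹, hmv' a, hmv' a⁻¹, hmv' b, hmv' b⁻¹,
      c1, c1', c2, c2', c3, c3', c4, c4',
      ka, ka2, kb, kb2, kv, kv2, ka', ka2', kb', kb2', kv', kv2']
    abel
  · rw [hx0, hx3]
    simp only [pow_two, mul_assoc, mul_add, add_mul, mul_one, one_mul, sub_eq_add_neg,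
      neg_add, mul_neg, neg_mul,
      hmv a, hmv a⁻¹, hmv b, hmv b⁻¹, hmv' a, hmv' a⁻¹, hmv' b, hmv' b⁻¹,
      c1, c1', c2, c2', c3, c3', c4, c4',
      ka, ka2, kb, kb2, kv, kv2, ka', ka2', kb', kb2', kv', kv2']
    abel

/-- With `X_δ := q^{1/2}(X₀X₃ - qX₁X₂)`, one also has
`X_δ = q^{1/2}(X₋₁X₂ - qX₀X₁)` and `X_δ = X^{(-1,1)} + X^{(1,-1)} + X^{(-1,-1)}`. -/
theorem Xdelta_eq
{F : Type*} [DivisionRing F] (v : F) (hv : v ≠ 0)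
    (hvc : ∀ x : F, v * x = x * v)
    (X : ℤ → F) (hXne : ∀ m : ℤ, X m ≠ 0)
    (h12 : X 1 * X 2 = v ^ 2 * (X 2 * X 1))
    (hrec : ∀ m : ℤ, X (m - 1) * X (m + 1) = v ^ 2 * X m ^ 2 + 1) :
    v * (X 0 * X 3 - v ^ 2 * (X 1 * X 2)) = v * (X (-1) * X 2 - v ^ 2 * (X 0 * X 1)) ∧
      v * (X 0 * X 3 - v ^ 2 * (X 1 * X 2))
        = Xmon v (X 1) (X 2) (-1) 1 + Xmon v (X 1) (X 2) 1 (-1)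
          + Xmon v (X 1) (X 2) (-1) (-1) := by
  have h0 : X 0 * X 2 = v ^ 2 * X 1 ^ 2 + 1 := by simpa using hrec 1
  have h2 : X 1 * X 3 = v ^ 2 * X 2 ^ 2 + 1 := by simpa using hrec 2
  have hm : X (-1) * X 1 = v ^ 2 * X 0 ^ 2 + 1 := by simpa using hrec 0
  obtain ⟨e1, e2⟩ := key v hv hvc (X (-1)) (X 0) (X 1) (X 2) (X 3)
    (hXne 1) (hXne 2) h12 h0 h2 hm
  refine ⟨e1, ?_⟩
  rw [e2]
  simp [Xmon, mul_assoc]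
end

section
/- Let X_δ = q^{1/2}(X_0 X_3 - q X_1 X_2) = X^{(-1,1)} + X^{(1,-1)} + X^{(-1,-1)} in the quantum torus. Then for every integer n, X_n · X_δ = q^{-1/2} X_{n-1} + q^{1/2} X_{n+1}. -/
/-- With `X_δ = q^{1/2}(X₀X₃ - qX₁X₂)`, for every integer `n`,
`X_n X_δ = q^{-1/2} X_{n-1} + q^{1/2} X_{n+1}`. -/
theorem Xn_mul_Xdelta
{F : Type*} [DivisionRing F] (v : F) (hv : v ≠ 0)
    (hvc : ∀ x : F, v * x = x * v)
    (X : ℤ → F) (hXne : ∀ m : ℤ, X m ≠ 0)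
    (h12 : X 1 * X 2 = v ^ 2 * (X 2 * X 1))
    (hrec : ∀ m : ℤ, X (m - 1) * X (m + 1) = v ^ 2 * X m ^ 2 + 1) :
    ∀ n : ℤ, X n * (v * (X 0 * X 3 - v ^ 2 * (X 1 * X 2)))
      = v⁻¹ * X (n - 1) + v * X (n + 1) := by
  have cmu : ∀ x : F, Commute v x := fun x => hvc x
  have c1 : ∀ x y : F, x * (v * y) = v * (x * y) := by
    intro x y; rw [← mul_assoc, ← hvc x, mul_assoc]
  have c2 : ∀ x y : F, x * (v ^ 2 * y) = v ^ 2 * (x * y) := by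
    intro x y; rw [← mul_assoc, ← ((cmu x).pow_left 2).eq, mul_assoc]
  have ci : ∀ x y : F, x * (v⁻¹ * y) = v⁻¹ * (x * y) := by
    intro x y; rw [← mul_assoc, ← ((cmu x).inv_left₀).eq, mul_assoc]
  have h3 : (v : F) ^ 3 = v ^ 2 * v := by
    rw [← pow_succ]
  have h3' : (v : F) ^ 3 = v * v ^ 2 := by
    rw [h3, ← hvc]
  have vv1 : ∀ x : F, v * (v ^ 2 * (v⁻¹ * x)) = v ^ 2 * x := by
    intro x
    rw [← mul_assoc (v ^ 2) v⁻¹ x,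
      show (v : F) ^ 2 * v⁻¹ = v from by
        rw [pow_two, mul_assoc, mul_inv_cancel₀ hv, mul_one],
      ← mul_assoc, ← pow_two v]
  have vv2 : ∀ x : F, v * (v ^ 2 * (v * x)) = v ^ 2 * (v ^ 2 * x) := by
    intro x
    rw [← mul_assoc (v ^ 2) v x, ((cmu (v ^ 2)).eq).symm, mul_assoc v (v ^ 2) x,
      ← mul_assoc v v, ← pow_two v]
  have vw1 : ∀ x : F, v ^ 3 * (v⁻¹ * x) = v ^ 2 * x := by
    intro x
    rw [← mul_assoc,
      show (v : F) ^ 3 * v⁻¹ = v ^ 2 from by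
        rw [h3, mul_assoc, mul_inv_cancel₀ hv, mul_one]]
  have vw2 : ∀ x : F, v ^ 3 * (v * x) = v ^ 2 * (v ^ 2 * x) := by
    intro x
    rw [← mul_assoc, ← mul_assoc,
      show (v : F) ^ 3 * v = v ^ 2 * v ^ 2 from by
        rw [h3, mul_assoc, ← pow_two v]]
  have rec' : ∀ m : ℤ, X m * X (m + 2) = v ^ 2 * X (m + 1) ^ 2 + 1 := by
    intro m
    have h := hrec (m + 1)
    rw [show m + 1 - 1 = m by ring, show m + 1 + 1 = m + 2 by ring] at h
    exact h
  have cself : ∀ k : ℤ, X k * (v ^ 2 * X k ^ 2 + 1) = (v ^ 2 * X k ^ 2 + 1) * X k := by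
    intro k
    exact ((((cmu (X k)).pow_left 2).symm.mul_right
      ((Commute.refl (X k)).pow_right 2)).add_right (Commute.one_right _)).eq
  have up : ∀ m : ℤ, X m * X (m + 1) = v ^ 2 * (X (m + 1) * X m) →
      X (m + 1) * X (m + 2) = v ^ 2 * (X (m + 2) * X (m + 1)) := by
    intro m h
    apply mul_left_cancel₀ (hXne m)
    calc X m * (X (m + 1) * X (m + 2))
        = (X m * X (m + 1)) * X (m + 2) := by rw [mul_assoc]
      _ = (v ^ 2 * (X (m + 1) * X m)) * X (m + 2) := by rw [h]
      _ = v ^ 2 * (X (m + 1) * (X m * X (m + 2))) := by rw [mul_assoc, mul_assoc]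
      _ = v ^ 2 * (X (m + 1) * (v ^ 2 * X (m + 1) ^ 2 + 1)) := by rw [rec' m]
      _ = v ^ 2 * ((v ^ 2 * X (m + 1) ^ 2 + 1) * X (m + 1)) := by rw [cself]
      _ = v ^ 2 * ((X m * X (m + 2)) * X (m + 1)) := by rw [rec' m]
      _ = X m * (v ^ 2 * (X (m + 2) * X (m + 1))) := by rw [c2, mul_assoc]
  have down : ∀ m : ℤ, X (m + 1) * X (m + 2) = v ^ 2 * (X (m + 2) * X (m + 1)) →
      X m * X (m + 1) = v ^ 2 * (X (m + 1) * X m) := by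
    intro m h
    apply mul_right_cancel₀ (hXne (m + 2))
    calc (X m * X (m + 1)) * X (m + 2)
        = X m * (v ^ 2 * (X (m + 2) * X (m + 1))) := by rw [mul_assoc, h]
      _ = v ^ 2 * ((X m * X (m + 2)) * X (m + 1)) := by rw [c2, ← mul_assoc (X m)]
      _ = v ^ 2 * ((v ^ 2 * X (m + 1) ^ 2 + 1) * X (m + 1)) := by rw [rec' m]
      _ = v ^ 2 * (X (m + 1) * (v ^ 2 * X (m + 1) ^ 2 + 1)) := by rw [cself]
      _ = v ^ 2 * (X (m + 1) * (X m * X (m + 2))) := by rw [rec' m]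
      _ = (v ^ 2 * (X (m + 1) * X m)) * X (m + 2) := by rw [mul_assoc, mul_assoc]
  have comm : ∀ m : ℤ, X m * X (m + 1) = v ^ 2 * (X (m + 1) * X m) := by
    have key : ∀ k : ℤ, X (1 + k) * X (1 + k + 1) = v ^ 2 * (X (1 + k + 1) * X (1 + k)) := by
      intro k
      induction k using Int.induction_on with
      | zero => norm_num; exact h12
      | succ i ih =>
          rw [show (1 : ℤ) + ((i : ℤ) + 1) = 1 + (i : ℤ) + 1 by ring,
            show (1 : ℤ) + (i : ℤ) + 1 + 1 = 1 + (i : ℤ) + 2 by ring]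
          exact up _ ih
      | pred i ih =>
          apply down (1 + (-(i : ℤ) - 1))
          rw [show (1 : ℤ) + (-(i : ℤ) - 1) + 1 = 1 + -(i : ℤ) by ring,
            show (1 : ℤ) + (-(i : ℤ) - 1) + 2 = 1 + -(i : ℤ) + 1 by ring]
          exact ih
    intro m
    have h := key (m - 1)
    rw [show (1 : ℤ) + (m - 1) = m by ring] at h
    exact h
  have swap2 : ∀ x y : F, x * y = v ^ 2 * (y * x) →
      x * y ^ 2 = v ^ 2 * (v ^ 2 * (y ^ 2 * x)) := by
    intro x y h
    calc x * y ^ 2 = (x * y) * y := by rw [pow_two, mul_assoc]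
      _ = v ^ 2 * ((y * x) * y) := by rw [h, mul_assoc]
      _ = v ^ 2 * (y * (x * y)) := by rw [mul_assoc y]
      _ = v ^ 2 * (y * (v ^ 2 * (y * x))) := by rw [h]
      _ = v ^ 2 * (v ^ 2 * ((y * y) * x)) := by rw [c2, ← mul_assoc y]
      _ = v ^ 2 * (v ^ 2 * (y ^ 2 * x)) := by rw [← pow_two y]
  have rev : ∀ m : ℤ, v ^ 2 * (X (m + 2) * X m) = X (m + 1) ^ 2 + v ^ 2 := by
    intro m
    apply mul_left_cancel₀ (hXne m)
    calc X m * (v ^ 2 * (X (m + 2) * X m))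
        = v ^ 2 * ((X m * X (m + 2)) * X m) := by rw [c2, ← mul_assoc (X m)]
      _ = v ^ 2 * ((v ^ 2 * X (m + 1) ^ 2 + 1) * X m) := by rw [rec' m]
      _ = v ^ 2 * (v ^ 2 * (X (m + 1) ^ 2 * X m)) + v ^ 2 * X m := by
          rw [add_mul, one_mul, mul_add, mul_assoc]
      _ = X m * X (m + 1) ^ 2 + v ^ 2 * X m := by
          rw [swap2 (X m) (X (m + 1)) (comm m)]
      _ = X m * (X (m + 1) ^ 2 + v ^ 2) := by
          rw [mul_add, ((cmu (X m)).pow_left 2).eq]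
  have rev1 : ∀ m : ℤ, v ^ 2 * (X (m + 1) * X (m - 1)) = X m ^ 2 + v ^ 2 := by
    intro m
    have h := rev (m - 1)
    rw [show m - 1 + 2 = m + 1 by ring, show m - 1 + 1 = m by ring] at h
    exact h
  have rev2 : ∀ m : ℤ, v ^ 2 * (X m * X (m - 2)) = X (m - 1) ^ 2 + v ^ 2 := by
    intro m
    have h := rev (m - 2)
    rw [show m - 2 + 2 = m by ring, show m - 2 + 1 = m - 1 by ring] at h
    exact h
  set D := v * (X 0 * X 3 - v ^ 2 * (X 1 * X 2)) with hD
  have comm0 := comm 0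
  rw [show (0 : ℤ) + 1 = 1 by norm_num] at comm0
  have rec'0 := rec' 0
  rw [show (0 : ℤ) + 2 = 2 by norm_num, show (0 : ℤ) + 1 = 1 by norm_num] at rec'0
  have rec'1 := rec' 1
  rw [show (1 : ℤ) + 2 = 3 by norm_num, show (1 : ℤ) + 1 = 2 by norm_num] at rec'1
  have base : X 1 * D = v⁻¹ * X 0 + v * X 2 := by
    apply mul_left_cancel₀ hv
    have R : v * (v⁻¹ * X 0 + v * X 2) = X 0 + v ^ 2 * X 2 := by
      rw [mul_add, ← mul_assoc, mul_inv_cancel₀ hv, one_mul, ← mul_assoc, ← pow_two v]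
    have L : v * (X 1 * D) = X 0 + v ^ 2 * X 2 := by
      rw [hD, c1 (X 1), ← mul_assoc v v, ← pow_two v, mul_sub, c2, mul_sub,
        ← mul_assoc (X 1) (X 0), ← mul_assoc (v ^ 2) (X 1 * X 0) (X 3), ← comm0,
        mul_assoc (X 0), rec'1,
        mul_add, mul_one, c2, pow_two (X 2), ← mul_assoc (X 0), rec'0,
        add_mul, one_mul, mul_add, mul_assoc (v ^ 2 : F) (X 1 ^ 2), pow_two (X 1),
        ← mul_assoc (X 1)]
      abel
    rw [L, R]
  have pup : ∀ m : ℤ, X m * D = v⁻¹ * X (m - 1) + v * X (m + 1) →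
      X (m + 1) * D = v⁻¹ * X m + v * X (m + 2) := by
    intro m ih
    apply mul_left_cancel₀ (hXne m)
    apply mul_left_cancel₀ hv
    have L : v * (X m * (X (m + 1) * D))
        = (X m ^ 2 + v ^ 2) + v ^ 2 * (v ^ 2 * X (m + 1) ^ 2) := by
      rw [← mul_assoc (X m), comm m, mul_assoc (v ^ 2), mul_assoc (X (m + 1)), ih,
        mul_add, ci, c1, mul_add (v ^ 2 : F), mul_add v, vv1, vv2, rev1 m,
        ← pow_two (X (m + 1))]
    have R : v * (X m * (v⁻¹ * X m + v * X (m + 2)))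
        = X m ^ 2 + (v ^ 2 * (v ^ 2 * X (m + 1) ^ 2) + v ^ 2) := by
      rw [mul_add, ci, c1, mul_add, ← mul_assoc v v⁻¹, mul_inv_cancel₀ hv, one_mul,
        ← mul_assoc v v, ← pow_two v, ← pow_two (X m), rec' m, mul_add, mul_one]
    rw [L, R]
    abel
  have pdown : ∀ m : ℤ, X m * D = v⁻¹ * X (m - 1) + v * X (m + 1) →
      X (m - 1) * D = v⁻¹ * X (m - 2) + v * X m := by
    intro m ih
    have commm1 := comm (m - 1)
    rw [show m - 1 + 1 = m by ring] at commm1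
    apply mul_left_cancel₀ (hXne m)
    apply mul_left_cancel₀ (pow_ne_zero 3 hv)
    have L : v ^ 3 * (X m * (X (m - 1) * D))
        = X (m - 1) ^ 2 + (v ^ 2 * (v ^ 2 * X m ^ 2) + v ^ 2) := by
      rw [← mul_assoc (X m), h3', mul_assoc v (v ^ 2), ← mul_assoc (v ^ 2),
        ← commm1, mul_assoc (X (m - 1)), ih,
        mul_add, ci, c1, hrec m, mul_add v, ← mul_assoc v v⁻¹, mul_inv_cancel₀ hv,
        one_mul, ← mul_assoc v v, ← pow_two v, ← pow_two (X (m - 1)), mul_add, mul_one]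
    have R : v ^ 3 * (X m * (v⁻¹ * X (m - 2) + v * X m))
        = (X (m - 1) ^ 2 + v ^ 2) + v ^ 2 * (v ^ 2 * X m ^ 2) := by
      rw [mul_add, ci, c1, mul_add, vw1, vw2, rev2 m, ← pow_two (X m)]
    rw [L, R]
    abel
  have main : ∀ k : ℤ, X (1 + k) * D = v⁻¹ * X (1 + k - 1) + v * X (1 + k + 1) := by
    intro k
    induction k using Int.induction_on with
    | zero => norm_num; exact base
    | succ i ih =>
        rw [show (1 : ℤ) + ((i : ℤ) + 1) = 1 + (i : ℤ) + 1 by ring,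
          show (1 : ℤ) + (i : ℤ) + 1 - 1 = 1 + (i : ℤ) by ring,
          show (1 : ℤ) + (i : ℤ) + 1 + 1 = 1 + (i : ℤ) + 2 by ring]
        exact pup _ ih
    | pred i ih =>
        have h := pdown _ ih
        rw [show (1 : ℤ) + (-(i : ℤ) - 1) = 1 + -(i : ℤ) - 1 by ring,
          show (1 : ℤ) + -(i : ℤ) - 1 - 1 = 1 + -(i : ℤ) - 2 by ring,
          show (1 : ℤ) + -(i : ℤ) - 1 + 1 = 1 + -(i : ℤ) by ring]
        exact h
  intro n
  have h := main (n - 1)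
  rw [show (1 : ℤ) + (n - 1) = n by ring] at h
  exact h
end

section
/- Let σ be the ℚ(q^{1/2})-algebra automorphism of the skew field of fractions of the quantum torus determined by σ(X_m) = X_{m+1} for all m (equivalently σ(X_1) = X_2, σ(X_2) = X_3). Then σ(X_δ) = X_δ, where X_δ = q^{1/2}(X_0X_3 - qX_1X_2). -/
/-- The `ℚ(q^{1/2})`-algebra automorphism `σ` determined by `σ(X_m) = X_{m+1}`
fixes `X_δ = q^{1/2}(X₀X₃ - qX₁X₂)`. -/
theorem sigma_fixes_Xdelta
{F : Type*} [DivisionRing F] (v : F) (hv : v ≠ 0)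
    (hvc : ∀ x : F, v * x = x * v)
    (X : ℤ → F) (hXne : ∀ m : ℤ, X m ≠ 0)
    (h12 : X 1 * X 2 = v ^ 2 * (X 2 * X 1))
    (hrec : ∀ m : ℤ, X (m - 1) * X (m + 1) = v ^ 2 * X m ^ 2 + 1)
    (σ : F ≃+* F) (hσv : σ v = v) (hσX : ∀ m : ℤ, σ (X m) = X (m + 1)) :
    σ (v * (X 0 * X 3 - v ^ 2 * (X 1 * X 2))) = v * (X 0 * X 3 - v ^ 2 * (X 1 * X 2)) := by
  have hc2 : ∀ x : F, v ^ 2 * x = x * v ^ 2 := by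
    intro x
    have h : Commute v x := hvc x
    exact (h.pow_left 2).eq
  have hmid : ∀ x y : F, x * (v ^ 2 * y) = v ^ 2 * (x * y) := by
    intro x y; rw [← mul_assoc, ← hc2, mul_assoc]
  have h02 : X 0 * X 2 = v ^ 2 * X 1 ^ 2 + 1 := by
    have := hrec 1; norm_num at this; exact this
  have h13 : X 1 * X 3 = v ^ 2 * X 2 ^ 2 + 1 := by
    have := hrec 2; norm_num at this; exact this
  have h24 : X 2 * X 4 = v ^ 2 * X 3 ^ 2 + 1 := by
    have := hrec 3; norm_num at this; exact this
  -- `v² X₂ X₀ = X₁² + v²`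
  have h20 : v ^ 2 * (X 2 * X 0) = X 1 ^ 2 + v ^ 2 := by
    apply mul_right_cancel₀ (hXne 2)
    have s1 : X 2 * (v ^ 2 * X 1 ^ 2 + 1) = v ^ 2 * (X 2 * X 1) * X 1 + X 2 := by
      rw [mul_add, mul_one, hmid, sq (X 1), ← mul_assoc (X 2) (X 1) (X 1), mul_assoc (v ^ 2)]
    calc v ^ 2 * (X 2 * X 0) * X 2
        = v ^ 2 * (X 2 * (X 0 * X 2)) := by rw [mul_assoc, mul_assoc]
      _ = v ^ 2 * (X 2 * (v ^ 2 * X 1 ^ 2 + 1)) := by rw [h02]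
      _ = v ^ 2 * (v ^ 2 * (X 2 * X 1) * X 1 + X 2) := by rw [s1]
      _ = v ^ 2 * ((X 1 * X 2) * X 1 + X 2) := by rw [← h12]
      _ = v ^ 2 * (X 1 * (X 2 * X 1)) + v ^ 2 * X 2 := by
          rw [mul_add, mul_assoc (X 1) (X 2) (X 1)]
      _ = X 1 * (v ^ 2 * (X 2 * X 1)) + v ^ 2 * X 2 := by rw [hmid]
      _ = X 1 * (X 1 * X 2) + v ^ 2 * X 2 := by rw [← h12]
      _ = (X 1 ^ 2 + v ^ 2) * X 2 := by rw [add_mul, sq (X 1), mul_assoc]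
  have key : X 1 * X 4 - v ^ 2 * (X 2 * X 3) = X 0 * X 3 - v ^ 2 * (X 1 * X 2) := by
    have hX2 : (v ^ 2 * X 2 : F) ≠ 0 := mul_ne_zero (pow_ne_zero 2 hv) (hXne 2)
    apply mul_left_cancel₀ hX2
    have t1 : v ^ 2 * X 2 * (X 1 * X 4)
        = v ^ 2 * (v ^ 2 * (X 2 * X 2) * X 3) + (v ^ 2 * X 3 + X 1) := by
      calc v ^ 2 * X 2 * (X 1 * X 4)
          = v ^ 2 * (X 2 * X 1) * X 4 := by
            rw [mul_assoc, ← mul_assoc (X 2) (X 1) (X 4), ← mul_assoc (v ^ 2)]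
        _ = (X 1 * X 2) * X 4 := by rw [← h12]
        _ = X 1 * (v ^ 2 * X 3 ^ 2 + 1) := by rw [mul_assoc, h24]
        _ = v ^ 2 * (X 1 * X 3 * X 3) + X 1 := by
            rw [mul_add, mul_one, hmid, sq (X 3), ← mul_assoc (X 1) (X 3) (X 3)]
        _ = v ^ 2 * ((v ^ 2 * X 2 ^ 2 + 1) * X 3) + X 1 := by rw [h13]
        _ = v ^ 2 * (v ^ 2 * (X 2 * X 2) * X 3) + (v ^ 2 * X 3 + X 1) := by
            rw [add_mul, one_mul, mul_add, sq (X 2)]; rw [add_assoc]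
    have t2 : v ^ 2 * X 2 * (v ^ 2 * (X 2 * X 3))
        = v ^ 2 * (v ^ 2 * (X 2 * X 2) * X 3) := by
      rw [mul_assoc (v ^ 2) (X 2), hmid, ← mul_assoc (X 2) (X 2) (X 3),
        ← mul_assoc (v ^ 2) (X 2 * X 2) (X 3)]
    have t3 : v ^ 2 * X 2 * (X 0 * X 3) = (X 1 ^ 2 + v ^ 2) * X 3 := by
      rw [mul_assoc, ← mul_assoc (X 2) (X 0) (X 3), ← mul_assoc (v ^ 2), h20]
    have t4 : v ^ 2 * X 2 * (v ^ 2 * (X 1 * X 2)) = X 1 * (X 1 * X 3) - X 1 := by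
      calc v ^ 2 * X 2 * (v ^ 2 * (X 1 * X 2))
          = v ^ 2 * (v ^ 2 * (X 2 * X 1) * X 2) := by
            rw [mul_assoc (v ^ 2) (X 2), hmid, ← mul_assoc (X 2) (X 1) (X 2),
              ← mul_assoc (v ^ 2) (X 2 * X 1) (X 2)]
        _ = v ^ 2 * ((X 1 * X 2) * X 2) := by rw [← h12]
        _ = X 1 * (v ^ 2 * X 2 ^ 2) := by rw [mul_assoc, hmid, sq (X 2)]
        _ = X 1 * (X 1 * X 3 - 1) := by
            have : v ^ 2 * X 2 ^ 2 = X 1 * X 3 - 1 := by rw [h13]; abel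
            rw [this]
        _ = X 1 * (X 1 * X 3) - X 1 := by rw [mul_sub, mul_one]
    calc v ^ 2 * X 2 * (X 1 * X 4 - v ^ 2 * (X 2 * X 3))
        = v ^ 2 * X 2 * (X 1 * X 4) - v ^ 2 * X 2 * (v ^ 2 * (X 2 * X 3)) := by
          rw [mul_sub]
      _ = v ^ 2 * X 3 + X 1 := by rw [t1, t2]; abel
      _ = X 1 * (X 1 * X 3) + v ^ 2 * X 3 - (X 1 * (X 1 * X 3) - X 1) := by abel
      _ = (X 1 ^ 2 + v ^ 2) * X 3 - (X 1 * (X 1 * X 3) - X 1) := by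
          rw [add_mul, sq (X 1), mul_assoc]
      _ = v ^ 2 * X 2 * (X 0 * X 3) - v ^ 2 * X 2 * (v ^ 2 * (X 1 * X 2)) := by
          rw [t3, t4]
      _ = v ^ 2 * X 2 * (X 0 * X 3 - v ^ 2 * (X 1 * X 2)) := by rw [mul_sub]
  have hσ : σ (v * (X 0 * X 3 - v ^ 2 * (X 1 * X 2)))
      = v * (X 1 * X 4 - v ^ 2 * (X 2 * X 3)) := by
    rw [map_mul, map_sub, map_mul, map_mul, map_mul, map_pow, hσv, hσX, hσX, hσX, hσX]
    norm_num
  rw [hσ, key]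
end

section
/- Set z := X_δ and z_m := F_m(z), where F_m is the m-th normalized Chebyshev polynomial of the first kind. Then for all m ≥ 1 and all n ∈ ℤ, X_n · z_m = q^{m/2} X_{n+m} + q^{-m/2} X_{n-m}. -/
/-- The normalized Chebyshev polynomials of the first kind:
`F 0 = 1`, `F 1 = X`, `F 2 = X^2 - 2`, `F (n+1) = F n * F 1 - F (n-1)` for `n ≥ 2`. -/
noncomputable def chebF : ℕ → Polynomial ℤ
  | 0 => 1
  | 1 => Polynomial.X
  | 2 => Polynomial.X ^ 2 - 2
  | n + 3 => chebF (n + 2) * Polynomial.X - chebF (n + 1)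

section aux

variable {F : Type*} [DivisionRing F] (v : F)

lemma hv2c (hvc : ∀ x : F, v * x = x * v) : ∀ x : F, v ^ 2 * x = x * v ^ 2 := by
  intro x
  rw [pow_two, mul_assoc, hvc x, ← mul_assoc, hvc x, mul_assoc]

/-- propagate quasi-commutation forward -/
lemma key_fwd (hvc : ∀ x : F, v * x = x * v) (a b c : F) (ha : a ≠ 0)
    (hac : a * c = v ^ 2 * b ^ 2 + 1) (hab : a * b = v ^ 2 * (b * a)) :
    b * c = v ^ 2 * (c * b) := by
  have hv2 := hv2c v hvc
  apply mul_left_cancel₀ ha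
  calc a * (b * c) = (a * b) * c := by rw [mul_assoc]
    _ = v ^ 2 * (b * (a * c)) := by rw [hab, mul_assoc, mul_assoc]
    _ = v ^ 2 * (b * (v ^ 2 * b ^ 2 + 1)) := by rw [hac]
    _ = v ^ 2 * ((v ^ 2 * b ^ 2 + 1) * b) := by
        rw [mul_add, add_mul, mul_one, one_mul, ← mul_assoc, ← hv2 b]
        noncomm_ring
    _ = v ^ 2 * ((a * c) * b) := by rw [hac]
    _ = a * (v ^ 2 * (c * b)) := by
        rw [← mul_assoc, hv2 (a * c)]
        conv_rhs => rw [← mul_assoc (v ^ 2) c b, hv2 c]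
        noncomm_ring

lemma key_bwd (hvc : ∀ x : F, v * x = x * v) (a b c : F) (hc : c ≠ 0)
    (hac : a * c = v ^ 2 * b ^ 2 + 1) (hbc : b * c = v ^ 2 * (c * b)) :
    a * b = v ^ 2 * (b * a) := by
  have hv2 := hv2c v hvc
  apply mul_right_cancel₀ hc
  calc (a * b) * c = a * (b * c) := by rw [mul_assoc]
    _ = v ^ 2 * ((a * c) * b) := by rw [hbc, ← mul_assoc, ← hv2 a, mul_assoc, mul_assoc]
    _ = v ^ 2 * ((v ^ 2 * b ^ 2 + 1) * b) := by rw [hac]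
    _ = v ^ 2 * (b * (v ^ 2 * b ^ 2 + 1)) := by
        rw [mul_add, add_mul, mul_one, one_mul, ← mul_assoc, ← hv2 b]
        noncomm_ring
    _ = v ^ 2 * (b * (a * c)) := by rw [hac]
    _ = (v ^ 2 * (b * a)) * c := by rw [mul_assoc, mul_assoc]

end aux

section aux2

variable {F : Type*} [DivisionRing F] (v : F) (X : ℤ → F)

lemma comm_all (hvc : ∀ x : F, v * x = x * v)
    (hXne : ∀ m : ℤ, X m ≠ 0)
    (h12 : X 1 * X 2 = v ^ 2 * (X 2 * X 1))
    (hrec : ∀ m : ℤ, X (m - 1) * X (m + 1) = v ^ 2 * X m ^ 2 + 1) :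
    ∀ n : ℤ, X n * X (n + 1) = v ^ 2 * (X (n + 1) * X n) := by
  have fwd : ∀ n : ℤ, X n * X (n + 1) = v ^ 2 * (X (n + 1) * X n) →
      X (n + 1) * X (n + 1 + 1) = v ^ 2 * (X (n + 1 + 1) * X (n + 1)) := by
    intro n h
    exact key_fwd v hvc (X n) (X (n + 1)) (X (n + 1 + 1)) (hXne n)
      (by simpa using hrec (n + 1)) h
  have bwd : ∀ n : ℤ, X n * X (n + 1) = v ^ 2 * (X (n + 1) * X n) →
      X (n - 1) * X (n - 1 + 1) = v ^ 2 * (X (n - 1 + 1) * X (n - 1)) := by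
    intro n h
    have := key_bwd v hvc (X (n - 1)) (X n) (X (n + 1)) (hXne (n + 1)) (hrec n) h
    simpa using this
  have main : ∀ k : ℕ,
      (X (1 + k) * X (1 + k + 1) = v ^ 2 * (X (1 + k + 1) * X (1 + k))) ∧
      (X (1 - k) * X (1 - k + 1) = v ^ 2 * (X (1 - k + 1) * X (1 - k))) := by
    intro k
    induction k with
    | zero => constructor <;> simpa using h12
    | succ k ih =>
      constructor
      · have := fwd (1 + k) ih.1
        have e : (1 : ℤ) + ((k : ℤ) + 1) = 1 + k + 1 := by ring
        push_cast
        rw [e]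
        exact this
      · have := bwd (1 - k) ih.2
        have e : (1 : ℤ) - ((k : ℤ) + 1) = 1 - k - 1 := by ring
        push_cast
        rw [e]
        exact this
  intro n
  rcases le_or_gt 1 n with h | h
  · obtain ⟨k, rfl⟩ : ∃ k : ℕ, n = 1 + k := ⟨(n - 1).toNat, by omega⟩
    exact (main k).1
  · obtain ⟨k, rfl⟩ : ∃ k : ℕ, n = 1 - k := ⟨(1 - n).toNat, by omega⟩
    exact (main k).2

end aux2

section aux3

variable {F : Type*} [DivisionRing F] (v : F) (X : ℤ → F)

lemma sq_comm (hvc : ∀ x : F, v * x = x * v) (a b : F) (h : a * b = v ^ 2 * (b * a)) :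
    a * b ^ 2 = v ^ 2 * (v ^ 2 * (b ^ 2 * a)) := by
  have hv2 := hv2c v hvc
  calc a * b ^ 2 = (a * b) * b := by noncomm_ring
    _ = (v ^ 2 * (b * a)) * b := by rw [h]
    _ = v ^ 2 * (b * (a * b)) := by rw [mul_assoc, mul_assoc]
    _ = v ^ 2 * (b * (v ^ 2 * (b * a))) := by conv_lhs => rw [h]
    _ = v ^ 2 * (v ^ 2 * (b ^ 2 * a)) := by
        rw [← mul_assoc b, ← hv2 b]
        noncomm_ring

lemma lemB (hvc : ∀ x : F, v * x = x * v) (hXne : ∀ m : ℤ, X m ≠ 0)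
    (hrec : ∀ m : ℤ, X (m - 1) * X (m + 1) = v ^ 2 * X m ^ 2 + 1)
    (hcm : ∀ n : ℤ, X n * X (n + 1) = v ^ 2 * (X (n + 1) * X n)) (n : ℤ) :
    v ^ 2 * (X (n + 1 + 1) * X n) = X (n + 1) ^ 2 + v ^ 2 := by
  have hv2 := hv2c v hvc
  have hrecn : X n * X (n + 1 + 1) = v ^ 2 * X (n + 1) ^ 2 + 1 := by
    simpa using hrec (n + 1)
  have hsq := sq_comm v hvc (X n) (X (n + 1)) (hcm n)
  apply mul_left_cancel₀ (hXne n)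
  calc X n * (v ^ 2 * (X (n + 1 + 1) * X n))
      = v ^ 2 * ((X n * X (n + 1 + 1)) * X n) := by
        rw [← mul_assoc, ← hv2 (X n)]
        noncomm_ring
    _ = v ^ 2 * ((v ^ 2 * X (n + 1) ^ 2 + 1) * X n) := by rw [hrecn]
    _ = v ^ 2 * (v ^ 2 * (X (n + 1) ^ 2 * X n)) + v ^ 2 * X n := by noncomm_ring
    _ = X n * X (n + 1) ^ 2 + v ^ 2 * X n := by rw [hsq]
    _ = X n * (X (n + 1) ^ 2 + v ^ 2) := by rw [mul_add, ← hv2 (X n)]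

lemma lemC1 (hvc : ∀ x : F, v * x = x * v) (hXne : ∀ m : ℤ, X m ≠ 0)
    (hrec : ∀ m : ℤ, X (m - 1) * X (m + 1) = v ^ 2 * X m ^ 2 + 1)
    (hcm : ∀ n : ℤ, X n * X (n + 1) = v ^ 2 * (X (n + 1) * X n)) (n : ℤ) :
    v ^ 2 * (X (n + 1) * (X n * X (n + 1 + 1 + 1) - v ^ 2 * (X (n + 1) * X (n + 1 + 1))))
      = v ^ 2 * X (n + 1 + 1) + X n := by
  have hv2 := hv2c v hvc
  have hrecn : X n * X (n + 1 + 1) = v ^ 2 * X (n + 1) ^ 2 + 1 := by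
    simpa using hrec (n + 1)
  have hrecn2 : X (n + 1) * X (n + 1 + 1 + 1) = v ^ 2 * X (n + 1 + 1) ^ 2 + 1 := by
    simpa using hrec (n + 1 + 1)
  have h1 : v ^ 2 * (X (n + 1) * (X n * X (n + 1 + 1 + 1)))
      = v ^ 2 * (v ^ 2 * (X (n + 1) ^ 2 * X (n + 1 + 1))) + v ^ 2 * X (n + 1 + 1) + X n := by
    calc v ^ 2 * (X (n + 1) * (X n * X (n + 1 + 1 + 1)))
        = (v ^ 2 * (X (n + 1) * X n)) * X (n + 1 + 1 + 1) := by
          rw [← mul_assoc (X (n + 1)), ← mul_assoc]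
      _ = (X n * X (n + 1)) * X (n + 1 + 1 + 1) := by rw [← hcm n]
      _ = X n * (X (n + 1) * X (n + 1 + 1 + 1)) := by rw [mul_assoc]
      _ = X n * (v ^ 2 * X (n + 1 + 1) ^ 2 + 1) := by rw [hrecn2]
      _ = v ^ 2 * ((X n * X (n + 1 + 1)) * X (n + 1 + 1)) + X n := by
          rw [mul_add, mul_one, ← mul_assoc, ← hv2 (X n)]
          noncomm_ring
      _ = v ^ 2 * ((v ^ 2 * X (n + 1) ^ 2 + 1) * X (n + 1 + 1)) + X n := by rw [hrecn]
      _ = v ^ 2 * (v ^ 2 * (X (n + 1) ^ 2 * X (n + 1 + 1))) + v ^ 2 * X (n + 1 + 1) + X n := by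
          noncomm_ring
  have h2 : v ^ 2 * (X (n + 1) * (v ^ 2 * (X (n + 1) * X (n + 1 + 1))))
      = v ^ 2 * (v ^ 2 * (X (n + 1) ^ 2 * X (n + 1 + 1))) := by
    rw [← mul_assoc (X (n + 1)), ← hv2 (X (n + 1))]
    noncomm_ring
  rw [mul_sub, mul_sub, h1, h2]
  abel

lemma lemC2 (hvc : ∀ x : F, v * x = x * v) (hXne : ∀ m : ℤ, X m ≠ 0)
    (hrec : ∀ m : ℤ, X (m - 1) * X (m + 1) = v ^ 2 * X m ^ 2 + 1)
    (hcm : ∀ n : ℤ, X n * X (n + 1) = v ^ 2 * (X (n + 1) * X n)) (n : ℤ) :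
    v ^ 2 * (X (n + 1 + 1) * (X n * X (n + 1 + 1 + 1) - v ^ 2 * (X (n + 1) * X (n + 1 + 1))))
      = v ^ 2 * X (n + 1 + 1 + 1) + X (n + 1) := by
  have hv2 := hv2c v hvc
  have hrecn2 : X (n + 1) * X (n + 1 + 1 + 1) = v ^ 2 * X (n + 1 + 1) ^ 2 + 1 := by
    simpa using hrec (n + 1 + 1)
  have h1 : v ^ 2 * (X (n + 1 + 1) * (X n * X (n + 1 + 1 + 1)))
      = v ^ 2 * (X (n + 1) * X (n + 1 + 1) ^ 2) + X (n + 1) + v ^ 2 * X (n + 1 + 1 + 1) := by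
    calc v ^ 2 * (X (n + 1 + 1) * (X n * X (n + 1 + 1 + 1)))
        = (v ^ 2 * (X (n + 1 + 1) * X n)) * X (n + 1 + 1 + 1) := by
          rw [← mul_assoc (X (n + 1 + 1)), ← mul_assoc]
      _ = (X (n + 1) ^ 2 + v ^ 2) * X (n + 1 + 1 + 1) := by
          rw [lemB v X hvc hXne hrec hcm n]
      _ = X (n + 1) * (X (n + 1) * X (n + 1 + 1 + 1)) + v ^ 2 * X (n + 1 + 1 + 1) := by
          noncomm_ring
      _ = X (n + 1) * (v ^ 2 * X (n + 1 + 1) ^ 2 + 1) + v ^ 2 * X (n + 1 + 1 + 1) := by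
          rw [hrecn2]
      _ = v ^ 2 * (X (n + 1) * X (n + 1 + 1) ^ 2) + X (n + 1) + v ^ 2 * X (n + 1 + 1 + 1) := by
          rw [mul_add, mul_one, ← mul_assoc, ← hv2 (X (n + 1))]
          noncomm_ring
  have h2 : v ^ 2 * (X (n + 1 + 1) * (v ^ 2 * (X (n + 1) * X (n + 1 + 1))))
      = v ^ 2 * (X (n + 1) * X (n + 1 + 1) ^ 2) := by
    calc v ^ 2 * (X (n + 1 + 1) * (v ^ 2 * (X (n + 1) * X (n + 1 + 1))))
        = v ^ 2 * ((v ^ 2 * (X (n + 1 + 1) * X (n + 1))) * X (n + 1 + 1)) := by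
          rw [← mul_assoc (X (n + 1 + 1)), ← hv2 (X (n + 1 + 1))]
          noncomm_ring
      _ = v ^ 2 * ((X (n + 1) * X (n + 1 + 1)) * X (n + 1 + 1)) := by rw [← hcm (n + 1)]
      _ = v ^ 2 * (X (n + 1) * X (n + 1 + 1) ^ 2) := by noncomm_ring
  rw [mul_sub, mul_sub, h1, h2]
  abel

end aux3

lemma int_const {G : Type*} (E : ℤ → G) (h : ∀ n : ℤ, E (n + 1) = E n) : ∀ n : ℤ, E n = E 0 := by
  have main : ∀ k : ℕ, E k = E 0 ∧ E (-k) = E 0 := by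
    intro k
    induction k with
    | zero => simp
    | succ k ih =>
      constructor
      · have e : ((k + 1 : ℕ) : ℤ) = (k : ℤ) + 1 := by push_cast; ring
        rw [e, h k]
        exact ih.1
      · have h2 := h (-(k : ℤ) - 1)
        have e1 : (-(k : ℤ) - 1) + 1 = -(k : ℤ) := by ring
        rw [e1] at h2
        rw [show (-(((k + 1) : ℕ) : ℤ)) = -(k : ℤ) - 1 by push_cast; ring, ← h2]
        exact ih.2
  intro n
  rcases le_or_gt 0 n with h' | h'
  · have := (main n.toNat).1
    rwa [Int.toNat_of_nonneg h'] at this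
  · have := (main (-n).toNat).2
    rwa [show -(((-n).toNat : ℤ)) = n by omega] at this

section aux4

variable {F : Type*} [DivisionRing F] (v : F) (X : ℤ → F)

lemma Xz (hv : v ≠ 0) (hvc : ∀ x : F, v * x = x * v)
    (hXne : ∀ m : ℤ, X m ≠ 0)
    (h12 : X 1 * X 2 = v ^ 2 * (X 2 * X 1))
    (hrec : ∀ m : ℤ, X (m - 1) * X (m + 1) = v ^ 2 * X m ^ 2 + 1) :
    ∀ n : ℤ, X n * (v * (X 0 * X 3 - v ^ 2 * (X 1 * X 2)))
      = v * X (n + 1) + v⁻¹ * X (n - 1) := by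
  have hcm := comm_all v X hvc hXne h12 hrec
  have hv2 := hv2c v hvc
  have hv2ne : (v : F) ^ 2 ≠ 0 := pow_ne_zero _ hv
  have wstep : ∀ n : ℤ,
      X (n + 1) * X (n + 1 + 1 + 1 + 1) - v ^ 2 * (X (n + 1 + 1) * X (n + 1 + 1 + 1))
        = X n * X (n + 1 + 1 + 1) - v ^ 2 * (X (n + 1) * X (n + 1 + 1)) := by
    intro n
    have h1 := lemC1 v X hvc hXne hrec hcm (n + 1)
    have h2 := lemC2 v X hvc hXne hrec hcm n
    apply mul_left_cancel₀ (hXne (n + 1 + 1))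
    apply mul_left_cancel₀ hv2ne
    rw [h1, h2]
  have hconst : ∀ n : ℤ,
      X n * X (n + 1 + 1 + 1) - v ^ 2 * (X (n + 1) * X (n + 1 + 1))
        = X 0 * X 3 - v ^ 2 * (X 1 * X 2) := by
    intro n
    have := int_const
      (fun n => X n * X (n + 1 + 1 + 1) - v ^ 2 * (X (n + 1) * X (n + 1 + 1)))
      (fun n => wstep n) n
    rw [this]
    norm_num
  intro n
  have hC := lemC1 v X hvc hXne hrec hcm (n - 1)
  simp only [sub_add_cancel] at hC
  apply mul_left_cancel₀ hv
  calc v * (X n * (v * (X 0 * X 3 - v ^ 2 * (X 1 * X 2))))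
      = v ^ 2 * (X n * (X 0 * X 3 - v ^ 2 * (X 1 * X 2))) := by
        rw [← mul_assoc (X n) v, ← hvc (X n), ← mul_assoc v (v * X n), ← mul_assoc v v,
          ← pow_two, mul_assoc]
    _ = v ^ 2 * X (n + 1) + X (n - 1) := by
        rw [← hconst (n - 1)]
        simp only [sub_add_cancel]
        exact hC
    _ = v * (v * X (n + 1) + v⁻¹ * X (n - 1)) := by
        rw [mul_add, ← mul_assoc, ← pow_two, ← mul_assoc, mul_inv_cancel₀ hv, one_mul]

end aux4

lemma step2 {F : Type*} [DivisionRing F] (v Z zA zB : F) (hv : v ≠ 0)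
    (X : ℤ → F)
    (hXz : ∀ n : ℤ, X n * Z = v * X (n + 1) + v⁻¹ * X (n - 1)) (M n : ℤ)
    (h1 : X n * zA = v ^ M * X (n + M) + v ^ (-M) * X (n - M))
    (h2 : X n * zB = v ^ (M - 1) * X (n + (M - 1)) + v ^ (-(M - 1)) * X (n - (M - 1))) :
    X n * (zA * Z - zB)
      = v ^ (M + 1) * X (n + (M + 1)) + v ^ (-(M + 1)) * X (n - (M + 1)) := by
  have ea : v ^ M * v = v ^ (M + 1) := (zpow_add_one₀ hv M).symm
  have eb : v ^ M * v⁻¹ = v ^ (M - 1) := (zpow_sub_one₀ hv M).symm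
  have ec : v ^ (-M) * v = v ^ (-(M - 1)) := by
    rw [← zpow_add_one₀ hv]; congr 1; ring
  have ed : v ^ (-M) * v⁻¹ = v ^ (-(M + 1)) := by
    rw [← zpow_sub_one₀ hv]; congr 1; ring
  have i1 : n + M + 1 = n + (M + 1) := by ring
  have i2 : n + M - 1 = n + (M - 1) := by ring
  have i3 : n - M + 1 = n - (M - 1) := by ring
  have i4 : n - M - 1 = n - (M + 1) := by ring
  rw [mul_sub, ← mul_assoc, h1, h2, add_mul, mul_assoc, mul_assoc,
    hXz (n + M), hXz (n - M), i1, i2, i3, i4]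
  simp only [mul_add, ← mul_assoc, ea, eb, ec, ed]
  abel


/-- With `z_m := F_m(X_δ)`, `X_δ = q^{1/2}(X₀X₃ - qX₁X₂)`, for all `m ≥ 1` and `n ∈ ℤ`:
`X_n z_m = q^{m/2} X_{n+m} + q^{-m/2} X_{n-m}`. -/
theorem Xn_mul_zm
{F : Type*} [DivisionRing F] (v : F) (hv : v ≠ 0)
    (hvc : ∀ x : F, v * x = x * v)
    (X : ℤ → F) (hXne : ∀ m : ℤ, X m ≠ 0)
    (h12 : X 1 * X 2 = v ^ 2 * (X 2 * X 1))
    (hrec : ∀ m : ℤ, X (m - 1) * X (m + 1) = v ^ 2 * X m ^ 2 + 1) :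
    ∀ (m : ℕ), 1 ≤ m → ∀ n : ℤ,
      X n * Polynomial.aeval (v * (X 0 * X 3 - v ^ 2 * (X 1 * X 2))) (chebF m)
        = v ^ (m : ℤ) * X (n + m) + v ^ (-(m : ℤ)) * X (n - m) := by
  set Z : F := v * (X 0 * X 3 - v ^ 2 * (X 1 * X 2)) with hZ
  have hXz : ∀ n : ℤ, X n * Z = v * X (n + 1) + v⁻¹ * X (n - 1) :=
    Xz v X hv hvc hXne h12 hrec
  -- base case m = 1
  have P1 : ∀ n : ℤ, X n * Polynomial.aeval Z (chebF 1)
      = v ^ ((1 : ℕ) : ℤ) * X (n + (1 : ℕ)) + v ^ (-((1 : ℕ) : ℤ)) * X (n - (1 : ℕ)) := by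
    intro n
    simp only [chebF, Polynomial.aeval_X, Nat.cast_one, zpow_one, zpow_neg_one]
    exact hXz n
  -- base case m = 2
  have P2 : ∀ n : ℤ, X n * Polynomial.aeval Z (chebF 2)
      = v ^ ((2 : ℕ) : ℤ) * X (n + (2 : ℕ)) + v ^ (-((2 : ℕ) : ℤ)) * X (n - (2 : ℕ)) := by
    intro n
    have hev : Polynomial.aeval Z (chebF 2) = Z * Z - 2 := by
      simp [chebF, sq, map_ofNat]
    have h1 : X n * Z = v ^ (1 : ℤ) * X (n + 1) + v ^ (-(1 : ℤ)) * X (n - 1) := by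
      rw [zpow_one, zpow_neg_one]; exact hXz n
    have h2 : X n * (2 : F)
        = v ^ ((1 : ℤ) - 1) * X (n + ((1 : ℤ) - 1)) + v ^ (-((1 : ℤ) - 1)) * X (n - ((1 : ℤ) - 1)) := by
      norm_num [mul_two]
    have := step2 v Z Z 2 hv X hXz 1 n h1 h2
    rw [hev]
    push_cast
    rw [show ((2 : ℤ)) = 1 + 1 by norm_num]
    exact this
  -- inductive step
  have key : ∀ k : ℕ, (∀ n : ℤ, X n * Polynomial.aeval Z (chebF (k + 1))
      = v ^ ((k + 1 : ℕ) : ℤ) * X (n + (k + 1 : ℕ)) + v ^ (-((k + 1 : ℕ) : ℤ)) * X (n - (k + 1 : ℕ)))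
      ∧ (∀ n : ℤ, X n * Polynomial.aeval Z (chebF (k + 2))
      = v ^ ((k + 2 : ℕ) : ℤ) * X (n + (k + 2 : ℕ)) + v ^ (-((k + 2 : ℕ) : ℤ)) * X (n - (k + 2 : ℕ))) := by
    intro k
    induction k with
    | zero => exact ⟨P1, P2⟩
    | succ k ih =>
      refine ⟨ih.2, ?_⟩
      intro n
      have hev : Polynomial.aeval Z (chebF (k + 3))
          = Polynomial.aeval Z (chebF (k + 2)) * Z - Polynomial.aeval Z (chebF (k + 1)) := by
        simp [chebF]
      have h1 := ih.2 n
      have h2 := ih.1 n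
      push_cast at h1 h2 ⊢
      rw [show ((k : ℤ) + 1) = (k : ℤ) + 2 - 1 by ring] at h2
      have := step2 v Z (Polynomial.aeval Z (chebF (k + 2))) (Polynomial.aeval Z (chebF (k + 1)))
        hv X hXz ((k : ℤ) + 2) n h1 h2
      rw [show ((k : ℤ) + 1 + 2) = (k : ℤ) + 2 + 1 by ring]
      rw [show (k + 1 + 2) = k + 3 by ring, hev]
      exact this
  intro m hm n
  obtain ⟨k, rfl⟩ : ∃ k : ℕ, m = k + 1 := ⟨m - 1, by omega⟩
  exact (key k).1 n
end

section
/- Every Laurent monomial coefficient appearing in the expansion of any cluster variable X_m (m ∈ ℤ) in terms of X_1, X_2 in the quantum torus lies in ℕ[q^{±1/2}]: i.e., writing X_m = Σ_{(a,b)} c_{a,b}(q^{1/2}) X^{(a,b)}, each c_{a,b} is a Laurent polynomial in q^{1/2} with nonnegative integer coefficients. -/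
section Aux
variable {F : Type*} [DivisionRing F]

lemma vpull {v : F} (hvc : ∀ z : F, v * z = z * v) (e : ℤ) (z w : F) :
    z * (v ^ e * w) = v ^ e * (z * w) := by
  have hc : Commute v z := hvc z
  rw [← mul_assoc, ← mul_assoc, (hc.zpow_left₀ e).eq]

lemma vpull' {v : F} (hvc : ∀ z : F, v * z = z * v) (e : ℤ) (z : F) :
    z * v ^ e = v ^ e * z := by
  simpa using vpull hvc e z 1

lemma vmerge {v : F} (hv : v ≠ 0) (e f : ℤ) (w : F) :
    v ^ e * (v ^ f * w) = v ^ (e + f) * w := by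
  rw [← mul_assoc, ← zpow_add₀ hv]

/-- rescale a q-commutation -/
lemma qscale {v : F} (hv : v ≠ 0) {e : ℤ} {a b : F}
    (h : a * b = v ^ e * (b * a)) : b * a = v ^ (-e) * (a * b) := by
  rw [h, vmerge hv, neg_add_cancel, zpow_zero, one_mul]

/-- swap via inverse -/
lemma qswap {v : F} (hvc : ∀ z : F, v * z = z * v) {e : ℤ} {a b : F} (hb : b ≠ 0)
    (h : a * b = v ^ e * (b * a)) : b⁻¹ * a = v ^ e * (a * b⁻¹) := by
  have h2 : b⁻¹ * (a * b) * b⁻¹ = b⁻¹ * (v ^ e * (b * a)) * b⁻¹ := by rw [h]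
  calc b⁻¹ * a = b⁻¹ * (a * b) * b⁻¹ := by
        rw [← mul_assoc b⁻¹ a b, mul_assoc (b⁻¹ * a) b b⁻¹, mul_inv_cancel₀ hb, mul_one]
    _ = b⁻¹ * (v ^ e * (b * a)) * b⁻¹ := h2
    _ = v ^ e * (a * b⁻¹) := by
        rw [vpull hvc, inv_mul_cancel_left₀ hb, mul_assoc]

/-- attach a trailing factor -/
lemma qmove {v : F} {e : ℤ} {a b : F} (h : a * b = v ^ e * (b * a)) (w : F) :
    a * (b * w) = v ^ e * (b * (a * w)) := by
  rw [← mul_assoc, h, mul_assoc, mul_assoc]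

end Aux

section Aux2
variable {F : Type*} [DivisionRing F]

lemma qpow {v : F} (hv : v ≠ 0) (hvc : ∀ z : F, v * z = z * v) {e : ℤ} {a b : F}
    (hb : b ≠ 0) (h : a * b = v ^ e * (b * a)) :
    ∀ k : ℤ, a * b ^ k = v ^ (e * k) * (b ^ k * a) := by
  intro k
  induction k using Int.induction_on with
  | zero => simp
  | succ k ih =>
      have he : e * ((k : ℤ) + 1) = e * k + e := by ring
      rw [zpow_add_one₀ hb, ← mul_assoc, ih, mul_assoc, mul_assoc, h,
        vpull hvc, vmerge hv, he, ← mul_assoc (b ^ (k:ℤ)) b a]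
  | pred k ih =>
      have h' : a * b⁻¹ = v ^ (-e) * (b⁻¹ * a) := qscale hv (qswap hvc hb h)
      have he : e * (-(k : ℤ) - 1) = e * (-(k:ℤ)) + -e := by ring
      rw [zpow_sub_one₀ hb, ← mul_assoc, ih, mul_assoc, mul_assoc, h',
        vpull hvc, vmerge hv, he, ← mul_assoc (b ^ (-(k:ℤ))) b⁻¹ a]

variable {v x y : F} (hv : v ≠ 0) (hx : x ≠ 0) (hy : y ≠ 0)
  (hvc : ∀ z : F, v * z = z * v) (hxy : x * y = v ^ (2:ℤ) * (y * x))

include hv hvc hx hy hxy in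
lemma zpow_swap : ∀ a b : ℤ, y ^ b * x ^ a = v ^ (-2 * a * b) * (x ^ a * y ^ b) := by
  intro a b
  have h1 : y * x ^ a = v ^ (-2 * a) * (x ^ a * y) := qpow hv hvc hx (qscale hv hxy) a
  have h2 : x ^ a * y = v ^ (2 * a) * (y * x ^ a) := by
    have h0 : -(-2 * a) = 2 * a := by ring
    have := qscale hv h1; rwa [h0] at this
  have h3 : x ^ a * y ^ b = v ^ (2 * a * b) * (y ^ b * x ^ a) := by
    exact qpow hv hvc hy h2 b
  have h0 : -(2 * a * b) = -2 * a * b := by ring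
  have := qscale hv h3; rwa [h0] at this

end Aux2

section Pos
variable {F : Type*} [DivisionRing F]

/-- raw positive representation: sum of `c * v^e * x^a * y^b` -/
def PosL (v x y z : F) : Prop :=
  ∃ (s : Finset (ℤ × ℤ × ℤ)) (c : ℤ × ℤ × ℤ → ℕ),
    z = ∑ t ∈ s, (c t : F) * (v ^ t.2.2 * (x ^ t.1 * y ^ t.2.1))

lemma posL_zero (v x y : F) : PosL v x y 0 := ⟨∅, fun _ => 0, by simp⟩

lemma posL_single (v x y : F) (a b e : ℤ) : PosL v x y (v ^ e * (x ^ a * y ^ b)) :=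
  ⟨{(a, b, e)}, fun _ => 1, by simp⟩

lemma posL_add {v x y z w : F} (hz : PosL v x y z) (hw : PosL v x y w) :
    PosL v x y (z + w) := by
  obtain ⟨s1, c1, rfl⟩ := hz
  obtain ⟨s2, c2, rfl⟩ := hw
  refine ⟨s1 ∪ s2, fun t => (if t ∈ s1 then c1 t else 0) + (if t ∈ s2 then c2 t else 0), ?_⟩
  have e1 : ∀ (s : Finset (ℤ×ℤ×ℤ)) (c : ℤ×ℤ×ℤ → ℕ), s ⊆ s1 ∪ s2 →
      (∑ t ∈ s1 ∪ s2, ((if t ∈ s then c t else 0 : ℕ) : F) * (v ^ t.2.2 * (x ^ t.1 * y ^ t.2.1)))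
      = ∑ t ∈ s, (c t : F) * (v ^ t.2.2 * (x ^ t.1 * y ^ t.2.1)) := by
    intro s c hs
    calc ∑ t ∈ s1 ∪ s2, ((if t ∈ s then c t else 0 : ℕ) : F) * (v ^ t.2.2 * (x ^ t.1 * y ^ t.2.1))
        = ∑ t ∈ s1 ∪ s2, (if t ∈ s then (c t : F) * (v ^ t.2.2 * (x ^ t.1 * y ^ t.2.1)) else 0) :=
          Finset.sum_congr rfl fun t _ => by split <;> simp
      _ = ∑ t ∈ (s1 ∪ s2) ∩ s, (c t : F) * (v ^ t.2.2 * (x ^ t.1 * y ^ t.2.1)) :=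
          Finset.sum_ite_mem _ _ _
      _ = ∑ t ∈ s, (c t : F) * (v ^ t.2.2 * (x ^ t.1 * y ^ t.2.1)) := by
          rw [Finset.inter_eq_right.mpr hs]
  rw [← e1 s1 c1 Finset.subset_union_left, ← e1 s2 c2 Finset.subset_union_right,
    ← Finset.sum_add_distrib]
  refine Finset.sum_congr rfl fun t _ => ?_
  push_cast
  rw [add_mul]

lemma mono_mul {v x y : F} (hv : v ≠ 0) (hx : x ≠ 0) (hy : y ≠ 0)
    (hvc : ∀ z : F, v * z = z * v) (hxy : x * y = v ^ (2:ℤ) * (y * x))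
    (a b e g h f : ℤ) :
    (v ^ e * (x ^ a * y ^ b)) * (v ^ f * (x ^ g * y ^ h)) =
      v ^ (e + f + (-2 * g * b)) * (x ^ (a + g) * y ^ (b + h)) := by
  have inner : y ^ b * (x ^ g * y ^ h) = v ^ (-2 * g * b) * (x ^ g * y ^ (b + h)) := by
    rw [← mul_assoc, zpow_swap hv hx hy hvc hxy, mul_assoc (v ^ (-2*g*b)),
      mul_assoc (x ^ g), ← zpow_add₀ hy]
  calc (v ^ e * (x ^ a * y ^ b)) * (v ^ f * (x ^ g * y ^ h))
      = v ^ e * ((x ^ a * y ^ b) * (v ^ f * (x ^ g * y ^ h))) := mul_assoc _ _ _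
    _ = v ^ e * (v ^ f * ((x ^ a * y ^ b) * (x ^ g * y ^ h))) := by rw [vpull hvc]
    _ = v ^ (e + f) * (x ^ a * (y ^ b * (x ^ g * y ^ h))) := by rw [vmerge hv, mul_assoc]
    _ = v ^ (e + f) * (v ^ (-2 * g * b) * (x ^ a * (x ^ g * y ^ (b + h)))) := by
        rw [inner, vpull hvc]
    _ = v ^ (e + f + (-2 * g * b)) * (x ^ (a + g) * y ^ (b + h)) := by
        rw [vmerge hv, ← mul_assoc (x ^ a), ← zpow_add₀ hx]

lemma posL_mulMono {v x y : F} (hv : v ≠ 0) (hx : x ≠ 0) (hy : y ≠ 0)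
    (hvc : ∀ z : F, v * z = z * v) (hxy : x * y = v ^ (2:ℤ) * (y * x))
    (a b e : ℤ) {z : F} (hz : PosL v x y z) :
    PosL v x y (v ^ e * (x ^ a * y ^ b) * z) := by
  obtain ⟨s, c, rfl⟩ := hz
  set φ : ℤ×ℤ×ℤ → ℤ×ℤ×ℤ := fun t => (a + t.1, b + t.2.1, e + t.2.2 + (-2 * t.1 * b)) with hφ
  set ψ : ℤ×ℤ×ℤ → ℤ×ℤ×ℤ := fun t => (t.1 - a, t.2.1 - b, t.2.2 - e + 2 * (t.1 - a) * b)
    with hψ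
  have hψφ : ∀ t, ψ (φ t) = t := by
    intro t
    simp only [hφ, hψ]
    refine Prod.ext ?_ (Prod.ext ?_ ?_) <;> simp <;> ring
  have hinj : Set.InjOn φ s := fun t1 _ t2 _ h => by
    have := congrArg ψ h; rwa [hψφ, hψφ] at this
  refine ⟨s.image φ, fun t => c (ψ t), ?_⟩
  rw [Finset.sum_image hinj, Finset.mul_sum]
  refine Finset.sum_congr rfl fun t _ => ?_
  simp only [hψφ]
  calc v ^ e * (x ^ a * y ^ b) * ((c t : F) * (v ^ t.2.2 * (x ^ t.1 * y ^ t.2.1)))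
      = (c t : F) * ((v ^ e * (x ^ a * y ^ b)) * (v ^ t.2.2 * (x ^ t.1 * y ^ t.2.1))) := by
        rw [← mul_assoc, ← (Nat.cast_commute (c t) (v ^ e * (x ^ a * y ^ b))).eq, mul_assoc]
    _ = (c t : F) * (v ^ ((φ t).2.2) * (x ^ ((φ t).1) * y ^ ((φ t).2.1))) := by
        rw [mono_mul hv hx hy hvc hxy]

end Pos
section Seq
variable {F : Type*} [DivisionRing F] {v : F} {X : ℤ → F}

variable (hv : v ≠ 0) (hvc : ∀ z : F, v * z = z * v) (hXne : ∀ m : ℤ, X m ≠ 0)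
  (h12 : X 1 * X 2 = v ^ (2:ℤ) * (X 2 * X 1))
  (hrec : ∀ m : ℤ, X (m - 1) * X (m + 1) = v ^ (2:ℤ) * X m ^ 2 + 1)

include hv hvc hXne h12 hrec in
lemma quasi : ∀ n : ℤ, X n * X (n + 1) = v ^ (2:ℤ) * (X (n + 1) * X n) := by
  intro n
  refine Int.inductionOn' n 1 ?_ ?_ ?_
  · simpa using h12
  · -- step up
    intro k _ hk
    have e1 : (k:ℤ) + 1 - 1 = k := by ring
    have hdef : X (k + 2) = (X k)⁻¹ * (v ^ (2:ℤ) * X (k+1) ^ 2 + 1) := by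
      rw [eq_inv_mul_iff_mul_eq₀ (hXne k)]
      have h := hrec (k + 1); rw [e1] at h
      rw [show (k:ℤ) + 2 = k + 1 + 1 by ring]; exact h
    have h1 : X (k+1) * (X k)⁻¹ = v ^ (2:ℤ) * ((X k)⁻¹ * X (k+1)) :=
      qscale hv (qswap hvc (hXne k) (qscale hv hk))
    have hcomm : X (k+1) * (v ^ (2:ℤ) * X (k+1) ^ 2 + 1)
        = (v ^ (2:ℤ) * X (k+1) ^ 2 + 1) * X (k+1) :=
      ((((show Commute v (X (k+1)) from hvc _).symm.zpow_right₀ 2).mul_right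
        ((Commute.refl _).pow_right 2)).add_right (Commute.one_right _)).eq
    calc X (k+1) * X (k+1+1)
        = X (k+1) * (X k)⁻¹ * (v ^ (2:ℤ) * X (k+1) ^ 2 + 1) := by
          rw [show (k:ℤ) + 1 + 1 = k + 2 by ring, hdef, mul_assoc]
      _ = v ^ (2:ℤ) * ((X k)⁻¹ * X (k+1)) * (v ^ (2:ℤ) * X (k+1) ^ 2 + 1) := by rw [h1]
      _ = v ^ (2:ℤ) * ((X k)⁻¹ * (X (k+1) * (v ^ (2:ℤ) * X (k+1) ^ 2 + 1))) := by
          rw [mul_assoc, mul_assoc]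
      _ = v ^ (2:ℤ) * ((X k)⁻¹ * ((v ^ (2:ℤ) * X (k+1) ^ 2 + 1) * X (k+1))) := by rw [hcomm]
      _ = v ^ (2:ℤ) * (X (k+1+1) * X (k+1)) := by
          rw [show (k:ℤ) + 1 + 1 = k + 2 by ring, hdef, mul_assoc]
  · -- step down
    intro k _ hk
    have e1 : (k:ℤ) - 1 + 1 = k := by ring
    have hdef : X (k - 1) = (v ^ (2:ℤ) * X k ^ 2 + 1) * (X (k+1))⁻¹ := by
      rw [eq_mul_inv_iff_mul_eq₀ (hXne (k+1))]
      exact hrec k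
    have h1 : (X (k+1))⁻¹ * X k = v ^ (2:ℤ) * (X k * (X (k+1))⁻¹) :=
      qswap hvc (hXne (k+1)) hk
    have hcomm : X k * (v ^ (2:ℤ) * X k ^ 2 + 1)
        = (v ^ (2:ℤ) * X k ^ 2 + 1) * X k :=
      ((((show Commute v (X k) from hvc _).symm.zpow_right₀ 2).mul_right
        ((Commute.refl _).pow_right 2)).add_right (Commute.one_right _)).eq
    rw [e1]
    calc X (k-1) * X k
        = (v ^ (2:ℤ) * X k ^ 2 + 1) * ((X (k+1))⁻¹ * X k) := by rw [hdef, mul_assoc]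
      _ = v ^ (2:ℤ) * ((v ^ (2:ℤ) * X k ^ 2 + 1) * (X k * (X (k+1))⁻¹)) := by
          rw [h1, vpull hvc]
      _ = v ^ (2:ℤ) * ((X k * (v ^ (2:ℤ) * X k ^ 2 + 1)) * (X (k+1))⁻¹) := by
          rw [hcomm, mul_assoc]
      _ = v ^ (2:ℤ) * (X k * X (k-1)) := by rw [mul_assoc, ← hdef]

include hv hvc hXne h12 hrec in
lemma recrev : ∀ n : ℤ, X (n + 1) * X (n - 1) = v ^ (-2:ℤ) * X n ^ 2 + 1 := by
  intro n
  have e1 : (n:ℤ) - 1 + 1 = n := by ring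
  have hq : X (n-1) * X n = v ^ (2:ℤ) * (X n * X (n-1)) := by
    have h := quasi hv hvc hXne h12 hrec (n-1); rwa [e1] at h
  have hsw : X n * X (n-1) = v ^ (-2:ℤ) * (X (n-1) * X n) := qscale hv hq
  have hdef : X (n + 1) = (X (n-1))⁻¹ * (v ^ (2:ℤ) * X n ^ 2 + 1) := by
    rw [eq_inv_mul_iff_mul_eq₀ (hXne (n-1))]; exact hrec n
  have hsq : v ^ (2:ℤ) * (X n ^ 2 * X (n-1)) = v ^ (-2:ℤ) * (X (n-1) * X n ^ 2) := by
    rw [pow_two]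
    calc v ^ (2:ℤ) * ((X n * X n) * X (n-1))
        = v ^ (2:ℤ) * (X n * (v ^ (-2:ℤ) * (X (n-1) * X n))) := by
          rw [mul_assoc (X n), hsw]
      _ = v ^ (2:ℤ) * (v ^ (-2:ℤ) * (X n * (X (n-1) * X n))) := by rw [vpull hvc]
      _ = (X n * X (n-1)) * X n := by
          rw [vmerge hv]; norm_num; rw [← mul_assoc]
      _ = v ^ (-2:ℤ) * (X (n-1) * X n) * X n := by rw [hsw]
      _ = v ^ (-2:ℤ) * (X (n-1) * (X n * X n)) := by
          rw [mul_assoc, mul_assoc]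
  have hflip : (v ^ (2:ℤ) * X n ^ 2 + 1) * X (n-1)
      = X (n-1) * (v ^ (-2:ℤ) * X n ^ 2 + 1) := by
    rw [add_mul, mul_add, one_mul, mul_one]
    congr 1
    rw [mul_assoc, hsq, ← vpull hvc, ← mul_assoc]
  calc X (n+1) * X (n-1)
      = (X (n-1))⁻¹ * ((v ^ (2:ℤ) * X n ^ 2 + 1) * X (n-1)) := by rw [hdef, mul_assoc]
    _ = (X (n-1))⁻¹ * (X (n-1) * (v ^ (-2:ℤ) * X n ^ 2 + 1)) := by rw [hflip]
    _ = v ^ (-2:ℤ) * X n ^ 2 + 1 := inv_mul_cancel_left₀ (hXne (n-1)) _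

include hv hvc hXne h12 hrec in
lemma Einv : ∀ n : ℤ, X (n-1) + v ^ (-2:ℤ) * X (n+1)
    = (X 1 * (X 2)⁻¹ + (X 1)⁻¹ * X 2 + v ^ (-2:ℤ) * ((X 1)⁻¹ * (X 2)⁻¹)) * X n := by
  have hv22 : (v:F) ^ (-2:ℤ) * v ^ (2:ℤ) = 1 := by rw [← zpow_add₀ hv]; norm_num
  intro n
  refine Int.inductionOn' n 2 ?_ ?_ ?_
  · -- base case n = 2
    have e : (2:ℤ) - 1 = 1 := by norm_num
    have hdef3 : X ((2:ℤ)+1) = (X 1)⁻¹ * (v ^ (2:ℤ) * X 2 ^ 2 + 1) := by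
      rw [eq_inv_mul_iff_mul_eq₀ (hXne 1)]
      have h := hrec 2; rwa [e] at h
    rw [e, hdef3, add_mul, add_mul]
    rw [inv_mul_cancel_right₀ (hXne 2) (X 1)]
    rw [mul_assoc ((X 1)⁻¹) (X 2) (X 2), ← pow_two]
    rw [mul_assoc (v ^ (-2:ℤ)) ((X 1)⁻¹ * (X 2)⁻¹) (X 2),
      inv_mul_cancel_right₀ (hXne 2) ((X 1)⁻¹)]
    rw [mul_add ((X 1)⁻¹), mul_one, vpull hvc (2:ℤ) ((X 1)⁻¹) (X 2 ^ 2)]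
    rw [mul_add (v ^ (-2:ℤ)), ← mul_assoc (v ^ (-2:ℤ)) (v ^ (2:ℤ)), hv22,
      one_mul, add_assoc]
  · -- step up
    intro k _ ih
    have e1 : (k:ℤ) + 1 - 1 = k := by ring
    have e2 : (k:ℤ) + 1 + 1 = k + 2 := by ring
    rw [e1, e2]
    symm
    have hEeq : X 1 * (X 2)⁻¹ + (X 1)⁻¹ * X 2 + v ^ (-2:ℤ) * ((X 1)⁻¹ * (X 2)⁻¹)
        = (X (k-1) + v ^ (-2:ℤ) * X (k+1)) * (X k)⁻¹ :=
      (eq_mul_inv_iff_mul_eq₀ (hXne k)).mpr ih.symm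
    have h1 : (X k)⁻¹ * X (k+1) = v ^ (-2:ℤ) * (X (k+1) * (X k)⁻¹) :=
      qswap hvc (hXne k) (qscale hv (quasi hv hvc hXne h12 hrec k))
    have hc : X (k+2) = (v ^ (-2:ℤ) * X (k+1) ^ 2 + 1) * (X k)⁻¹ := by
      rw [eq_mul_inv_iff_mul_eq₀ (hXne k)]
      have h := recrev hv hvc hXne h12 hrec (k+1); rwa [e1, e2] at h
    have ha2 : X k ^ 2 * (X k)⁻¹ = X k := by
      rw [pow_two, mul_assoc, mul_inv_cancel₀ (hXne k), mul_one]
    have hy1 : (v ^ (2:ℤ) * X k ^ 2 + 1) * (X k)⁻¹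
        = v ^ (2:ℤ) * (X k ^ 2 * (X k)⁻¹) + (X k)⁻¹ := by
      rw [add_mul, one_mul, mul_assoc]
    calc (X 1 * (X 2)⁻¹ + (X 1)⁻¹ * X 2 + v ^ (-2:ℤ) * ((X 1)⁻¹ * (X 2)⁻¹)) * X (k+1)
        = (X (k-1) + v ^ (-2:ℤ) * X (k+1)) * ((X k)⁻¹ * X (k+1)) := by
          rw [hEeq, mul_assoc]
      _ = v ^ (-2:ℤ) * ((X (k-1) + v ^ (-2:ℤ) * X (k+1)) * (X (k+1) * (X k)⁻¹)) := by
          rw [h1, vpull hvc]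
      _ = v ^ (-2:ℤ) * ((X (k-1) * X (k+1)) * (X k)⁻¹
            + v ^ (-2:ℤ) * ((X (k+1) * X (k+1)) * (X k)⁻¹)) := by
          rw [add_mul, ← mul_assoc (X (k-1)), mul_assoc (v ^ (-2:ℤ)) (X (k+1)),
            ← mul_assoc (X (k+1)) (X (k+1))]
      _ = v ^ (-2:ℤ) * ((v ^ (2:ℤ) * (X k ^ 2 * (X k)⁻¹) + (X k)⁻¹)
            + v ^ (-2:ℤ) * (X (k+1) ^ 2 * (X k)⁻¹)) := by
          rw [hrec k, hy1, ← pow_two]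
      _ = v ^ (-2:ℤ) * (v ^ (2:ℤ) * (X k ^ 2 * (X k)⁻¹))
            + v ^ (-2:ℤ) * (v ^ (-2:ℤ) * (X (k+1) ^ 2 * (X k)⁻¹) + (X k)⁻¹) := by
          rw [mul_add, mul_add, mul_add]; abel
      _ = X k + v ^ (-2:ℤ) * X (k+2) := by
          rw [← mul_assoc, hv22, one_mul, ha2, hc, add_mul, one_mul, mul_assoc]
  · -- step down
    intro k _ ih
    have e1 : (k:ℤ) - 1 + 1 = k := by ring
    have e2 : (k:ℤ) - 1 - 1 = k - 2 := by ring
    rw [e1, e2]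
    symm
    have hEeq : X 1 * (X 2)⁻¹ + (X 1)⁻¹ * X 2 + v ^ (-2:ℤ) * ((X 1)⁻¹ * (X 2)⁻¹)
        = (X (k-1) + v ^ (-2:ℤ) * X (k+1)) * (X k)⁻¹ :=
      (eq_mul_inv_iff_mul_eq₀ (hXne k)).mpr ih.symm
    have hq : X (k-1) * X k = v ^ (2:ℤ) * (X k * X (k-1)) := by
      have h := quasi hv hvc hXne h12 hrec (k-1); rwa [e1] at h
    have h1 : (X k)⁻¹ * X (k-1) = v ^ (2:ℤ) * (X (k-1) * (X k)⁻¹) :=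
      qswap hvc (hXne k) hq
    have hrr : X (k+1) * X (k-1) = v ^ (-2:ℤ) * X k ^ 2 + 1 :=
      recrev hv hvc hXne h12 hrec k
    have hdef2 : X (k-2) = (v ^ (2:ℤ) * X (k-1) ^ 2 + 1) * (X k)⁻¹ := by
      rw [eq_mul_inv_iff_mul_eq₀ (hXne k)]
      have h := hrec (k-1); rwa [e1, e2] at h
    have hb2 : X k ^ 2 * (X k)⁻¹ = X k := by
      rw [pow_two, mul_assoc, mul_inv_cancel₀ (hXne k), mul_one]
    calc (X 1 * (X 2)⁻¹ + (X 1)⁻¹ * X 2 + v ^ (-2:ℤ) * ((X 1)⁻¹ * (X 2)⁻¹)) * X (k-1)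
        = (X (k-1) + v ^ (-2:ℤ) * X (k+1)) * ((X k)⁻¹ * X (k-1)) := by
          rw [hEeq, mul_assoc]
      _ = v ^ (2:ℤ) * ((X (k-1) + v ^ (-2:ℤ) * X (k+1)) * (X (k-1) * (X k)⁻¹)) := by
          rw [h1, vpull hvc]
      _ = v ^ (2:ℤ) * ((X (k-1) * X (k-1)) * (X k)⁻¹
            + v ^ (-2:ℤ) * ((X (k+1) * X (k-1)) * (X k)⁻¹)) := by
          rw [add_mul, ← mul_assoc (X (k-1)) (X (k-1)), mul_assoc (v ^ (-2:ℤ)) (X (k+1)),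
            ← mul_assoc (X (k+1)) (X (k-1)) ((X k)⁻¹)]
      _ = v ^ (2:ℤ) * ((X (k-1) * X (k-1)) * (X k)⁻¹)
            + (v ^ (-2:ℤ) * X k ^ 2 + 1) * (X k)⁻¹ := by
          rw [hrr, mul_add, ← mul_assoc (v ^ (2:ℤ)) (v ^ (-2:ℤ)), ← zpow_add₀ hv]
          norm_num
      _ = (v ^ (2:ℤ) * X (k-1) ^ 2 + 1) * (X k)⁻¹ + v ^ (-2:ℤ) * X k := by
          rw [add_mul (v ^ (-2:ℤ) * X k ^ 2) 1 ((X k)⁻¹), one_mul,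
            mul_assoc (v ^ (-2:ℤ)) (X k ^ 2) ((X k)⁻¹), hb2,
            add_mul (v ^ (2:ℤ) * X (k-1) ^ 2) 1 ((X k)⁻¹), one_mul, ← pow_two,
            mul_assoc (v ^ (2:ℤ)) (X (k-1) ^ 2) ((X k)⁻¹)]
          abel
      _ = X (k-2) + v ^ (-2:ℤ) * X k := by rw [hdef2]
end Seq


section Final
variable {F : Type*} [DivisionRing F]

lemma posL_to_final {v x y z : F} (hv : v ≠ 0) (h : PosL v x y z) :
    ∃ (s : Finset (ℤ × ℤ × ℤ)) (c : ℤ × ℤ × ℤ → ℕ),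
      z = ∑ t ∈ s, (c t : F) * v ^ t.2.2 * Xmon v x y t.1 t.2.1 := by
  obtain ⟨s, c, rfl⟩ := h
  set σ : ℤ×ℤ×ℤ → ℤ×ℤ×ℤ := fun t => (t.1, t.2.1, t.2.2 + t.1 * t.2.1) with hσ
  set τ : ℤ×ℤ×ℤ → ℤ×ℤ×ℤ := fun t => (t.1, t.2.1, t.2.2 - t.1 * t.2.1) with hτ
  have hτσ : ∀ t, τ (σ t) = t := by
    intro t; simp only [hσ, hτ]
    refine Prod.ext ?_ (Prod.ext ?_ ?_) <;> simp
  have hinj : Set.InjOn σ s := fun t1 _ t2 _ h => by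
    have := congrArg τ h; rwa [hτσ, hτσ] at this
  refine ⟨s.image σ, fun t => c (τ t), ?_⟩
  rw [Finset.sum_image hinj]
  refine Finset.sum_congr rfl fun t _ => ?_
  simp only [hτσ]
  show (c t : F) * (v ^ t.2.2 * (x ^ t.1 * y ^ t.2.1))
      = (c t : F) * v ^ (t.2.2 + t.1 * t.2.1) * Xmon v x y t.1 t.2.1
  rw [Xmon, mul_assoc (v ^ (-(t.1 * t.2.1))) (x ^ t.1) (y ^ t.2.1),
    mul_assoc ((c t : F)) (v ^ (t.2.2 + t.1 * t.2.1)), vmerge hv,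
    show t.2.2 + t.1 * t.2.1 + -(t.1 * t.2.1) = t.2.2 by ring]

lemma key_s18 {v : F} {X : ℤ → F} (hv : v ≠ 0) (hvc : ∀ z : F, v * z = z * v)
    (hXne : ∀ m : ℤ, X m ≠ 0)
    (h12 : X 1 * X 2 = v ^ (2:ℤ) * (X 2 * X 1))
    (hrec : ∀ m : ℤ, X (m - 1) * X (m + 1) = v ^ (2:ℤ) * X m ^ 2 + 1) :
    ∀ m : ℤ, 1 ≤ m → ∃ (s : Finset (ℤ × ℤ × ℤ)) (c : ℤ × ℤ × ℤ → ℕ),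
      X m = ∑ t ∈ s, (c t : F) * v ^ t.2.2 * Xmon v (X 1) (X 2) t.1 t.2.1 := by
  intro m hm
  set x := X 1 with hxdef
  set y := X 2 with hydef
  have hx : x ≠ 0 := hXne 1
  have hy : y ≠ 0 := hXne 2
  have hxy : x * y = v ^ (2:ℤ) * (y * x) := h12
  -- the two structural identities
  have aux1 : ∀ k : ℤ, X (k+1)
      = v ^ (2:ℤ) * (x ^ (-1:ℤ) * y ^ (1:ℤ)) * X k
        + v ^ (0:ℤ) * (x ^ (-1:ℤ) * y ^ (-1:ℤ)) * X k
        + v ^ (2:ℤ) * (x ^ (0:ℤ) * y ^ (0:ℤ)) * (x * y⁻¹ * X k - X (k-1)) := by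
    intro k
    have h := Einv hv hvc hXne h12 hrec k
    have h2 : v ^ (-2:ℤ) * X (k+1)
        = (x * y⁻¹ + x⁻¹ * y + v ^ (-2:ℤ) * (x⁻¹ * y⁻¹)) * X k - X (k-1) :=
      eq_sub_of_add_eq' h
    have h3 : X (k+1) = v ^ (2:ℤ)
        * ((x * y⁻¹ + x⁻¹ * y + v ^ (-2:ℤ) * (x⁻¹ * y⁻¹)) * X k - X (k-1)) := by
      rw [← h2, vmerge hv]; norm_num
    have hexp : v ^ (2:ℤ) * ((x * y⁻¹ + x⁻¹ * y + v ^ (-2:ℤ) * (x⁻¹ * y⁻¹)) * X k - X (k-1))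
        = v ^ (2:ℤ) * ((x * y⁻¹) * X k) + v ^ (2:ℤ) * ((x⁻¹ * y) * X k)
          + (x⁻¹ * y⁻¹) * X k - v ^ (2:ℤ) * X (k-1) := by
      rw [mul_sub, add_mul, add_mul, mul_add, mul_add,
        mul_assoc (v ^ (-2:ℤ)) (x⁻¹ * y⁻¹) (X k), vmerge hv]
      norm_num
    simp only [zpow_neg_one, zpow_one, zpow_zero, mul_one, one_mul]
    rw [h3, hexp, mul_assoc (v ^ (2:ℤ)) (x⁻¹ * y) (X k), mul_sub (v ^ (2:ℤ)) (x * y⁻¹ * X k)]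
    abel
  have hxm : x * y⁻¹ = v ^ (0:ℤ) * (x ^ (1:ℤ) * y ^ (-1:ℤ)) := by simp
  have m1 : (x * y⁻¹) * (v ^ (2:ℤ) * (x ^ (-1:ℤ) * y ^ (1:ℤ))) = 1 := by
    rw [hxm, mono_mul hv hx hy hvc hxy 1 (-1) 0 (-1) 1 2]
    norm_num
  have m2 : (x * y⁻¹) * (v ^ (0:ℤ) * (x ^ (-1:ℤ) * y ^ (-1:ℤ)))
      = v ^ (-2:ℤ) * (x ^ (0:ℤ) * y ^ (-2:ℤ)) := by
    rw [hxm, mono_mul hv hx hy hvc hxy 1 (-1) 0 (-1) (-1) 0]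
    norm_num
  have m3 : (x * y⁻¹) * (v ^ (2:ℤ) * (x ^ (0:ℤ) * y ^ (0:ℤ)))
      = v ^ (2:ℤ) * (x ^ (1:ℤ) * y ^ (-1:ℤ)) := by
    rw [hxm, mono_mul hv hx hy hvc hxy 1 (-1) 0 0 0 2]
    norm_num
  have aux2 : ∀ k : ℤ, x * y⁻¹ * X (k+1) - X k
      = v ^ (-2:ℤ) * (x ^ (0:ℤ) * y ^ (-2:ℤ)) * X k
        + v ^ (2:ℤ) * (x ^ (1:ℤ) * y ^ (-1:ℤ)) * (x * y⁻¹ * X k - X (k-1)) := by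
    intro k
    rw [aux1 k, mul_add, mul_add,
      ← mul_assoc (x * y⁻¹) (v ^ (2:ℤ) * (x ^ (-1:ℤ) * y ^ (1:ℤ))) (X k),
      ← mul_assoc (x * y⁻¹) (v ^ (0:ℤ) * (x ^ (-1:ℤ) * y ^ (-1:ℤ))) (X k),
      ← mul_assoc (x * y⁻¹) (v ^ (2:ℤ) * (x ^ (0:ℤ) * y ^ (0:ℤ))) _,
      m1, m2, m3, one_mul]
    abel
  -- main induction
  have claim : ∀ n : ℕ, PosL v x y (X (2 + (n:ℤ)))
      ∧ PosL v x y (x * y⁻¹ * X (2 + (n:ℤ)) - X (1 + (n:ℤ))) := by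
    intro n
    induction n with
    | zero =>
        constructor
        · show PosL v x y (X (2 + ((0:ℕ):ℤ)))
          rw [show (2 + ((0:ℕ):ℤ)) = 2 by norm_num, ← hydef]
          simpa using posL_single v x y 0 1 0
        · rw [show (2 + ((0:ℕ):ℤ)) = 2 by norm_num, show (1 + ((0:ℕ):ℤ)) = 1 by norm_num,
            ← hydef, ← hxdef, inv_mul_cancel_right₀ hy x, sub_self]
          exact posL_zero v x y
    | succ n ih =>
        obtain ⟨hP, hD⟩ := ih
        have ek1 : (2:ℤ) + ((n+1:ℕ):ℤ) = (2 + (n:ℤ)) + 1 := by push_cast; ring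
        have ek2 : (1:ℤ) + ((n+1:ℕ):ℤ) = 2 + (n:ℤ) := by push_cast; ring
        have ek3 : (2 + (n:ℤ)) - 1 = 1 + (n:ℤ) := by ring
        have hD' : PosL v x y (x * y⁻¹ * X (2 + (n:ℤ)) - X ((2 + (n:ℤ)) - 1)) := by
          rwa [ek3]
        constructor
        · rw [ek1, aux1 (2 + (n:ℤ))]
          exact posL_add (posL_add
            (posL_mulMono hv hx hy hvc hxy (-1) 1 2 hP)
            (posL_mulMono hv hx hy hvc hxy (-1) (-1) 0 hP))
            (posL_mulMono hv hx hy hvc hxy 0 0 2 hD')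
        · rw [ek1, ek2, aux2 (2 + (n:ℤ))]
          exact posL_add
            (posL_mulMono hv hx hy hvc hxy 0 (-2) (-2) hP)
            (posL_mulMono hv hx hy hvc hxy 1 (-1) 2 hD')
  have hPos : PosL v x y (X m) := by
    rcases eq_or_lt_of_le hm with h1 | h2
    · rw [← h1, ← hxdef]
      simpa using posL_single v x y 1 0 0
    · have h2' : 2 ≤ m := h2
      have hn : (2:ℤ) + ((m - 2).toNat : ℤ) = m := by
        rw [Int.toNat_of_nonneg (by omega)]; ring
      have := (claim (m - 2).toNat).1
      rwa [hn] at this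
  exact posL_to_final hv hPos


lemma zpow_inv_neg {v : F} (e : ℤ) : (v⁻¹) ^ e = v ^ (-e) := by
  rw [inv_zpow, ← zpow_neg]

lemma Xmon_reflect {v x y : F} (hv : v ≠ 0) (hx : x ≠ 0) (hy : y ≠ 0)
    (hvc : ∀ z : F, v * z = z * v) (hxy : x * y = v ^ (2:ℤ) * (y * x)) (a b : ℤ) :
    Xmon v⁻¹ y x a b = Xmon v x y b a := by
  unfold Xmon
  rw [zpow_inv_neg, neg_neg, mul_assoc (v ^ (a*b)) (y ^ a) (x ^ b),
    zpow_swap hv hx hy hvc hxy b a, vmerge hv,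
    show a * b + -2 * b * a = -(b * a) by ring, ← mul_assoc]

end Final

/-- Positivity of cluster variables: every cluster variable `X_m` is an
`ℕ[q^{±1/2}]`-linear combination of the normalized monomials `X^{(a,b)}`; i.e. `X_m` is
a finite sum of terms `c · v^e · X^{(a,b)}` with `c ∈ ℕ`, `e ∈ ℤ`. -/
theorem cluster_variables_positive
{F : Type*} [DivisionRing F] (v : F) (hv : v ≠ 0)
    (hvc : ∀ x : F, v * x = x * v)
    (X : ℤ → F) (hXne : ∀ m : ℤ, X m ≠ 0)
    (h12 : X 1 * X 2 = v ^ 2 * (X 2 * X 1))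
    (hrec : ∀ m : ℤ, X (m - 1) * X (m + 1) = v ^ 2 * X m ^ 2 + 1) :
    ∀ m : ℤ, ∃ (s : Finset (ℤ × ℤ × ℤ)) (c : ℤ × ℤ × ℤ → ℕ),
      X m = ∑ t ∈ s, (c t : F) * v ^ t.2.2 * Xmon v (X 1) (X 2) t.1 t.2.1 := by
  intro m
  have h2z : (v:F) ^ (2:ℤ) = v ^ 2 := by
    rw [show (2:ℤ) = ((2:ℕ):ℤ) by norm_num, zpow_natCast]
  have h12z : X 1 * X 2 = v ^ (2:ℤ) * (X 2 * X 1) := by rw [h2z]; exact h12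
  have hrecz : ∀ k : ℤ, X (k - 1) * X (k + 1) = v ^ (2:ℤ) * X k ^ 2 + 1 := by
    intro k; rw [h2z]; exact hrec k
  rcases le_or_gt 1 m with h | h
  · exact key_s18 hv hvc hXne h12z hrecz m h
  · have hv' : v⁻¹ ≠ 0 := inv_ne_zero hv
    have hvc' : ∀ z : F, v⁻¹ * z = z * v⁻¹ :=
      fun z => ((show Commute v z from hvc z).inv_left₀).eq
    have hvinv2 : (v⁻¹ : F) ^ (2:ℤ) = v ^ (-2:ℤ) := zpow_inv_neg 2
    have hYne : ∀ k : ℤ, (fun k : ℤ => X (3 - k)) k ≠ 0 := fun k => hXne _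
    have hY1 : X ((3:ℤ) - 1) = X 2 := by norm_num
    have hY2 : X ((3:ℤ) - 2) = X 1 := by norm_num
    have h12' : X ((3:ℤ) - 1) * X ((3:ℤ) - 2) = (v⁻¹) ^ (2:ℤ) * (X ((3:ℤ)-2) * X ((3:ℤ)-1)) := by
      rw [hY1, hY2, hvinv2]
      exact qscale hv h12z
    have hrec' : ∀ k : ℤ, X (3 - (k - 1)) * X (3 - (k + 1))
        = (v⁻¹) ^ (2:ℤ) * X (3 - k) ^ 2 + 1 := by
      intro k
      rw [show (3:ℤ) - (k-1) = (3-k)+1 by ring, show (3:ℤ) - (k+1) = (3-k)-1 by ring, hvinv2]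
      exact recrev hv hvc hXne h12z hrecz (3-k)
    have hkey := key_s18 (X := fun k : ℤ => X (3 - k)) hv' hvc' hYne h12' hrec' (3-m) (by omega)
    obtain ⟨s, c, hrep⟩ := hkey
    beta_reduce at hrep
    rw [show (3:ℤ) - (3 - m) = m by ring, hY1, hY2] at hrep
    set σ : ℤ×ℤ×ℤ → ℤ×ℤ×ℤ := fun t => (t.2.1, t.1, -t.2.2) with hσ
    have hσσ : ∀ t, σ (σ t) = t := by intro t; simp [hσ]
    have hinj : Set.InjOn σ s := fun t1 _ t2 _ hh => by
      have := congrArg σ hh; rwa [hσσ, hσσ] at this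
    refine ⟨s.image σ, fun t => c (σ t), ?_⟩
    rw [hrep, Finset.sum_image hinj]
    refine Finset.sum_congr rfl fun t _ => ?_
    simp only [hσσ]
    show (c t : F) * (v⁻¹) ^ t.2.2 * Xmon v⁻¹ (X 2) (X 1) t.1 t.2.1
        = (c t : F) * v ^ (σ t).2.2 * Xmon v (X 1) (X 2) (σ t).1 (σ t).2.1
    rw [Xmon_reflect hv (hXne 1) (hXne 2) hvc h12z, zpow_inv_neg]
end
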